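/- Let τ ≥ 2 be an integer and p ∈ (0,1]. Let s be a time-homogeneous Markov chain on {1,…,τ+1} with deterministic initial state s₀ and transition probabilities: from state 1 the chain moves to state 3 with probability 1; from state 2 the chain moves to state 3 with probability 1; from state j with 3 ≤ j ≤ τ the chain moves to state j+1 with probability 1; and from state τ+1 the chain moves to state 1 with probability p and to state 2 with probability 1−p. Let Λ = {1}. Then almost surely the set {k ∈ ℕ : s(k) ∈ Λ} is infinite, and with t₀ < t₁ < ⋯ its increasing enumeration, the increments {t_{i+1} − t_i}_{i≥0} are mutually independent and identically distributed with ℙ(t_{i+1} − t_i = kτ) = (1−p)^{k−1} p for every integer k ≥ 1 (so each increment lies in {τ, 2τ, 3τ, …} almost surely). -/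

import Mathlib

open MeasureTheory ProbabilityTheory

/-- A time-homogeneous Markov chain on a (finite) state space `S` with transition
matrix `P`. -/
def IsMarkov {S : Type*} {Ω : Type*} [MeasurableSpace Ω] (μ : Measure Ω)
    (X : ℕ → Ω → S) (P : S → S → ℝ) : Prop :=
  ∀ (k : ℕ) (c : ℕ → S),
    μ {ω | ∀ i ≤ k, X i ω = c i} ≠ 0 →
    ∀ j : S,
      ProbabilityTheory.cond μ {ω | ∀ i ≤ k, X i ω = c i} {ω | X (k+1) ω = j}
        = ENNReal.ofReal (P (c k) j)



set_option linter.unusedSectionVars false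
namespace PORWF

variable (τ s0 : ℕ)

def T0 : ℕ := if s0 ≤ 1 then τ - 1 else τ - s0

def ctime (m : ℕ) : ℕ := T0 τ s0 + m * τ + 1

def pathFn (b : ℕ → Bool) (k : ℕ) : ℕ :=
  if k = 0 then s0
  else if k ≤ T0 τ s0 then k + (τ - T0 τ s0)
  else if (k - T0 τ s0 - 1) % τ = 0 then (if b ((k - T0 τ s0 - 1) / τ) then 0 else 1)
  else (k - T0 τ s0 - 1) % τ + 1

def nCoins (k : ℕ) : ℕ := if T0 τ s0 + 1 ≤ k then (k - T0 τ s0 - 1) / τ + 1 else 0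

variable {τ s0 : ℕ} (hτ : 2 ≤ τ) (hs0 : s0 ≤ τ)

lemma T0_le : T0 τ s0 ≤ τ - 1 := by
  unfold T0; split <;> omega

lemma pathFn_zero (b : ℕ → Bool) : pathFn τ s0 b 0 = s0 := by simp [pathFn]

include hτ in
lemma pathFn_gt (b : ℕ → Bool) (m r : ℕ) (hr : r < τ) {k : ℕ}
    (hk : k = T0 τ s0 + m * τ + r + 1) :
    pathFn τ s0 b k = if r = 0 then (if b m then 0 else 1) else r + 1 := by
  have h1 : k ≠ 0 := by omega
  have h2 : ¬ k ≤ T0 τ s0 := by omega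
  have h3 : k - T0 τ s0 - 1 = r + τ * m := by
    have : τ * m = m * τ := Nat.mul_comm _ _
    omega
  have hmod : (r + τ * m) % τ = r := by
    rw [Nat.add_mul_mod_self_left, Nat.mod_eq_of_lt hr]
  have hdiv : (r + τ * m) / τ = m := by
    rw [Nat.add_mul_div_left _ _ (by omega : 0 < τ), Nat.div_eq_of_lt hr]; omega
  rw [pathFn, if_neg h1, if_neg h2, h3, hmod, hdiv]

include hτ in
lemma nCoins_gt (m r : ℕ) (hr : r < τ) {k : ℕ} (hk : k = T0 τ s0 + m * τ + r + 1) :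
    nCoins τ s0 k = m + 1 := by
  have h3 : k - T0 τ s0 - 1 = r + τ * m := by
    have : τ * m = m * τ := Nat.mul_comm _ _
    omega
  have hdiv : (r + τ * m) / τ = m := by
    rw [Nat.add_mul_div_left _ _ (by omega : 0 < τ), Nat.div_eq_of_lt hr]; omega
  rw [nCoins, if_pos (by omega), h3, hdiv]

lemma nCoins_le_T0 {k : ℕ} (hk : k ≤ T0 τ s0) : nCoins τ s0 k = 0 := by
  rw [nCoins, if_neg (by omega)]

include hτ in
lemma exists_decomp {k : ℕ} (hk : T0 τ s0 < k) :
    ∃ m r, r < τ ∧ k = T0 τ s0 + m * τ + r + 1 := by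
  refine ⟨(k - T0 τ s0 - 1) / τ, (k - T0 τ s0 - 1) % τ, Nat.mod_lt _ (by omega), ?_⟩
  have h := Nat.div_add_mod (k - T0 τ s0 - 1) τ
  have : (k - T0 τ s0 - 1) / τ * τ = τ * ((k - T0 τ s0 - 1) / τ) := Nat.mul_comm _ _
  omega

lemma nCoins_mono : Monotone (nCoins τ s0) := by
  intro a c hac
  unfold nCoins
  by_cases ha : T0 τ s0 + 1 ≤ a
  · rw [if_pos ha, if_pos (by omega)]
    have h := Nat.div_le_div_right (c := τ) (by omega : a - T0 τ s0 - 1 ≤ c - T0 τ s0 - 1)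
    omega
  · rw [if_neg ha]
    exact Nat.zero_le _

include hτ hs0 in
/-- The fundamental trichotomy for one step of the deterministic path. -/
lemma shape (b : ℕ → Bool) (k : ℕ) :
    (pathFn τ s0 b k ≤ 1 ∧ pathFn τ s0 b (k+1) = 2 ∧ nCoins τ s0 (k+1) = nCoins τ s0 k) ∨
    (2 ≤ pathFn τ s0 b k ∧ pathFn τ s0 b k < τ ∧
      pathFn τ s0 b (k+1) = pathFn τ s0 b k + 1 ∧ nCoins τ s0 (k+1) = nCoins τ s0 k) ∨
    (pathFn τ s0 b k = τ ∧ k + 1 = ctime τ s0 (nCoins τ s0 k) ∧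
      pathFn τ s0 b (k+1) = (if b (nCoins τ s0 k) then 0 else 1) ∧
      nCoins τ s0 (k+1) = nCoins τ s0 k + 1) := by
  have hT0 : T0 τ s0 ≤ τ - 1 := T0_le
  rcases lt_trichotomy k (T0 τ s0) with hk | hk | hk
  · -- k < T0
    have hv1 : pathFn τ s0 b (k+1) = (k+1) + (τ - T0 τ s0) := by
      rw [pathFn, if_neg (by omega), if_pos (by omega)]
    have hn : nCoins τ s0 (k+1) = 0 := nCoins_le_T0 (by omega)
    have hn' : nCoins τ s0 k = 0 := nCoins_le_T0 (by omega)
    rcases Nat.eq_zero_or_pos k with rfl | hk0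
    · rw [pathFn_zero]
      by_cases hs1 : s0 ≤ 1
      · left
        have hT : T0 τ s0 = τ - 1 := by unfold T0; rw [if_pos hs1]
        refine ⟨hs1, ?_, by omega⟩
        rw [hv1]; omega
      · right; left
        have hT : T0 τ s0 = τ - s0 := by unfold T0; rw [if_neg hs1]
        refine ⟨by omega, by omega, ?_, by omega⟩
        rw [hv1]; omega
    · right; left
      have hv0 : pathFn τ s0 b k = k + (τ - T0 τ s0) := by
        rw [pathFn, if_neg (by omega), if_pos (by omega)]
      rw [hv0, hv1]
      refine ⟨by omega, by omega, by omega, by omega⟩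
  · -- k = T0
    right; right
    have hv0 : pathFn τ s0 b k = τ := by
      rcases Nat.eq_zero_or_pos k with h0 | hk0
      · rw [h0, pathFn_zero]
        unfold T0 at hk
        rw [h0] at hk
        split at hk <;> omega
      · rw [pathFn, if_neg (by omega), if_pos (by omega)]; omega
    have hv1 : pathFn τ s0 b (k+1) = if b 0 then 0 else 1 := by
      have h := pathFn_gt (s0 := s0) hτ b 0 0 (by omega) (k := k+1) (by omega)
      simpa using h
    have hn' : nCoins τ s0 k = 0 := nCoins_le_T0 (by omega)
    have hn : nCoins τ s0 (k+1) = 1 := nCoins_gt hτ 0 0 (by omega) (by omega)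
    refine ⟨hv0, ?_, by rw [hn']; exact hv1, by omega⟩
    rw [hn']; unfold ctime; omega
  · -- k > T0
    obtain ⟨m, r, hr, hk'⟩ := exists_decomp hτ hk
    have hmt : (m+1) * τ = m * τ + τ := by ring
    have hnk : nCoins τ s0 k = m + 1 := nCoins_gt hτ m r hr hk'
    have hv0 := pathFn_gt (s0 := s0) hτ b m r hr hk'
    rcases Nat.eq_zero_or_pos r with rfl | hr0
    · -- r = 0 : coin state
      left
      rw [if_pos rfl] at hv0
      have hv1 : pathFn τ s0 b (k+1) = 2 := by
        have h := pathFn_gt (s0 := s0) hτ b m 1 (by omega) (k := k+1) (by omega)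
        rw [if_neg (by omega)] at h
        exact h
      have hn1 : nCoins τ s0 (k+1) = m + 1 := nCoins_gt hτ m 1 (by omega) (by omega)
      refine ⟨?_, hv1, by omega⟩
      rw [hv0]; split <;> omega
    · rcases Nat.lt_or_ge r (τ - 1) with hrτ | hrτ
      · -- 1 ≤ r < τ-1
        right; left
        rw [if_neg (by omega)] at hv0
        have hv1 : pathFn τ s0 b (k+1) = r + 2 := by
          have h := pathFn_gt (s0 := s0) hτ b m (r+1) (by omega) (k := k+1) (by omega)
          rwa [if_neg (by omega)] at h
        have hn1 : nCoins τ s0 (k+1) = m + 1 := nCoins_gt hτ m (r+1) (by omega) (by omega)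
        exact ⟨by omega, by omega, by omega, by omega⟩
      · -- r = τ - 1
        right; right
        rw [if_neg (by omega)] at hv0
        have hv1 : pathFn τ s0 b (k+1) = if b (m+1) then 0 else 1 := by
          have h := pathFn_gt (s0 := s0) hτ b (m+1) 0 (by omega) (k := k+1) (by omega)
          simpa using h
        have hn1 : nCoins τ s0 (k+1) = m + 2 := nCoins_gt hτ (m+1) 0 (by omega) (by omega)
        refine ⟨by omega, ?_, by rw [hnk]; exact hv1, by omega⟩
        rw [hnk]; unfold ctime; omega

include hτ hs0 in
lemma pathFn_le (b : ℕ → Bool) (k : ℕ) : pathFn τ s0 b k ≤ τ := by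
  rcases Nat.lt_or_ge (T0 τ s0) k with hk | hk
  · obtain ⟨m, r, hr, hk'⟩ := exists_decomp hτ hk
    rw [pathFn_gt hτ b m r hr hk']
    split
    · split <;> omega
    · omega
  · rcases Nat.eq_zero_or_pos k with rfl | hk0
    · rw [pathFn_zero]; exact hs0
    · rw [pathFn, if_neg (by omega), if_pos hk]
      have := T0_le (τ := τ) (s0 := s0)
      omega

include hτ in
lemma pathFn_eq_zero_iff (b : ℕ → Bool) (k : ℕ) :
    pathFn τ s0 b k = 0 ↔ (k = 0 ∧ s0 = 0) ∨ ∃ m, k = ctime τ s0 m ∧ b m = true := by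
  have hT0 : T0 τ s0 ≤ τ - 1 := T0_le
  rcases Nat.eq_zero_or_pos k with rfl | hk0
  · rw [pathFn_zero]
    simp only [ctime]
    constructor
    · intro h; exact Or.inl ⟨by simp, h⟩
    · rintro (⟨-, h⟩ | ⟨m, hm, -⟩)
      · exact h
      · omega
  · rcases Nat.lt_or_ge (T0 τ s0) k with hk | hk
    · obtain ⟨m, r, hr, hk'⟩ := exists_decomp hτ hk
      rw [pathFn_gt hτ b m r hr hk']
      constructor
      · intro h
        right
        rcases Nat.eq_zero_or_pos r with rfl | hrr
        · rw [if_pos rfl] at h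
          refine ⟨m, by unfold ctime; omega, by revert h; split <;> simp_all⟩
        · rw [if_neg (by omega)] at h; omega
      · rintro (⟨h0, -⟩ | ⟨m', hm', hb⟩)
        · omega
        · unfold ctime at hm'
          have h1 : m' * τ = m * τ + r := by omega
          have h2 : r = 0 := by
            have h3 : (m' * τ) % τ = 0 := Nat.mul_mod_left m' τ
            have h4 : (m * τ + r) % τ = r := by
              rw [Nat.add_comm, Nat.add_mul_mod_self_right, Nat.mod_eq_of_lt hr]
            rw [h1, h4] at h3
            exact h3
          have h5 : m' = m := by
            have : m' * τ = m * τ := by omega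
            exact Nat.eq_of_mul_eq_mul_right (by omega) this
          rw [h2] at *
          rw [if_pos rfl, ← h5, hb]
          simp
    · rw [pathFn, if_neg (by omega), if_pos hk]
      constructor
      · intro h; omega
      · rintro (⟨h0, -⟩ | ⟨m, hm, -⟩)
        · omega
        · unfold ctime at hm; omega

lemma pathFn_congr {b b' : ℕ → Bool} {n : ℕ} (hbb : ∀ m < n, b m = b' m)
    {k : ℕ} (hk : nCoins τ s0 k ≤ n) : pathFn τ s0 b k = pathFn τ s0 b' k := by
  unfold pathFn
  split
  · rfl
  · split
    · rfl
    · split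
      · have h : (k - T0 τ s0 - 1) / τ < nCoins τ s0 k := by
          rw [nCoins, if_pos (by omega)]; omega
        rw [hbb _ (by omega)]
      · rfl

lemma nCoins_ctime (hτ' : 0 < τ) (m : ℕ) : nCoins τ s0 (ctime τ s0 m) = m + 1 := by
  rw [nCoins, if_pos (by simp [ctime])]
  have h : ctime τ s0 m - T0 τ s0 - 1 = m * τ := by unfold ctime; omega
  rw [h, Nat.mul_div_cancel _ hτ']



lemma count_segment (p : ℕ → Prop) [DecidablePred p] (a : ℕ) :
    ∀ d : ℕ, (∀ x, a ≤ x → x < a + d → ¬ p x) → Nat.count p (a + d) = Nat.count p a := by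
  intro d
  induction d with
  | zero => intro _; rfl
  | succ d ih =>
    intro h
    have h2 : a + (d + 1) = (a + d) + 1 := by omega
    rw [h2, Nat.count_succ, if_neg (h _ (by omega) (by omega)),
      ih (fun x hx hx' => h x hx (by omega))]
    omega

include hτ in
lemma ctime_strictMono : StrictMono (ctime τ s0) := by
  intro a c hac
  unfold ctime
  have h := (Nat.mul_lt_mul_right (by omega : 0 < τ)).mpr hac
  omega

include hτ in
lemma count_zeros (b : ℕ → Bool) (M : ℕ) :
    Nat.count (fun k => pathFn τ s0 b k = 0) (ctime τ s0 M)
      = (if s0 = 0 then 1 else 0) + Nat.count (fun m => b m = true) M := by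
  induction M with
  | zero =>
    have h1 : ctime τ s0 0 = 1 + T0 τ s0 := by unfold ctime; omega
    rw [h1, count_segment _ 1 (T0 τ s0) ?seg]
    case seg =>
      intro x hx hx' hp
      rw [pathFn_eq_zero_iff hτ] at hp
      rcases hp with ⟨h0, -⟩ | ⟨m, hm, -⟩
      · omega
      · unfold ctime at hm
        omega
    rw [Nat.count_succ, Nat.count_zero, Nat.count_zero, pathFn_zero]
    simp
  | succ M ih =>
    have hmt : (M+1) * τ = M * τ + τ := by ring
    have h1 : ctime τ s0 (M + 1) = (ctime τ s0 M + 1) + (τ - 1) := by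
      unfold ctime; omega
    rw [h1, count_segment _ _ (τ - 1) ?seg2]
    case seg2 =>
      intro x hx hx' hp
      rw [pathFn_eq_zero_iff hτ] at hp
      rcases hp with ⟨h0, -⟩ | ⟨m, hm, -⟩
      · unfold ctime at hx; omega
      · subst hm
        rcases Nat.lt_or_ge m (M+1) with h | h
        · have := (ctime_strictMono (s0 := s0) hτ).monotone (show m ≤ M by omega)
          omega
        · have := (ctime_strictMono (s0 := s0) hτ).monotone (show M + 1 ≤ m from h)
          omega
    rw [Nat.count_succ, Nat.count_succ, ih]
    have hiff : (pathFn τ s0 b (ctime τ s0 M) = 0) ↔ (b M = true) := by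
      rw [pathFn_eq_zero_iff hτ]
      constructor
      · rintro (⟨h0, -⟩ | ⟨m, hm, hbm⟩)
        · unfold ctime at h0; omega
        · have : m = M := by
            by_contra hne
            rcases Nat.lt_or_ge m M with h | h
            · have := ctime_strictMono (s0 := s0) hτ h; omega
            · have := ctime_strictMono (s0 := s0) hτ (show M < m by omega); omega
          subst this; exact hbm
      · intro hbM; exact Or.inr ⟨M, rfl, hbM⟩
    by_cases hbM : b M = true
    · rw [if_pos hbM, if_pos (hiff.mpr hbM)]; omega
    · rw [if_neg hbM, if_neg (fun h => hbM (hiff.mp h))]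
      omega

/-- index of the `i`-th head -/
noncomputable def Hh (b : ℕ → Bool) (i : ℕ) : ℕ := Nat.nth (fun m => b m = true) i

/-- the `j`-th "gap data": number of tails before the `j`-th head (after the previous one) -/
noncomputable def gap (b : ℕ → Bool) (j : ℕ) : ℕ :=
  if j = 0 then Hh b 0 else Hh b j - Hh b (j-1) - 1

include hτ in
lemma nth_zero_eq (b : ℕ → Bool) (hb : {m | b m = true}.Infinite) (i : ℕ) :
    Nat.nth (fun k => pathFn τ s0 b k = 0) ((if s0 = 0 then 1 else 0) + i)
      = ctime τ s0 (Hh b i) := by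
  classical
  have hp : pathFn τ s0 b (ctime τ s0 (Hh b i)) = 0 := by
    rw [pathFn_eq_zero_iff hτ]
    exact Or.inr ⟨Hh b i, rfl, Nat.nth_mem_of_infinite hb i⟩
  have hc : Nat.count (fun k => pathFn τ s0 b k = 0) (ctime τ s0 (Hh b i))
      = (if s0 = 0 then 1 else 0) + i := by
    rw [count_zeros hτ]
    unfold Hh
    rw [Nat.count_nth_of_infinite hb]
  have h3 := Nat.nth_count (p := fun k => pathFn τ s0 b k = 0) hp
  rwa [hc] at h3

include hτ in
lemma nth_zero_eq_zero (b : ℕ → Bool) (hs00 : s0 = 0) :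
    Nat.nth (fun k => pathFn τ s0 b k = 0) 0 = 0 := by
  classical
  have hp : pathFn τ s0 b 0 = 0 := by rw [pathFn_zero, hs00]
  have h3 := Nat.nth_count (p := fun k => pathFn τ s0 b k = 0) hp
  rwa [Nat.count_zero] at h3

include hτ hs0 in
/-- increments of the enumeration of zeros, in terms of gaps between heads. -/
lemma increment_eq (b : ℕ → Bool) (hb : {m | b m = true}.Infinite) (i : ℕ) :
    Nat.nth (fun k => pathFn τ s0 b k = 0) (i+1) - Nat.nth (fun k => pathFn τ s0 b k = 0) i
      = (gap b (i + (if s0 = 0 then 0 else 1)) + 1) * τ := by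
  have hmono := Nat.nth_strictMono (p := fun m => b m = true) hb
  by_cases hs00 : s0 = 0
  · rw [if_pos hs00]
    rcases Nat.eq_zero_or_pos i with rfl | hi
    · rw [nth_zero_eq_zero hτ b hs00]
      have h1 := nth_zero_eq hτ (s0 := s0) b hb 0
      rw [if_pos hs00] at h1
      rw [h1]
      have hg : gap b (0 + 0) = Hh b 0 := by unfold gap; simp
      rw [hg]
      unfold ctime Hh
      have hT : T0 τ s0 = τ - 1 := by unfold T0; rw [if_pos (by omega)]
      have hr : (Nat.nth (fun m => b m = true) 0 + 1) * τ
          = Nat.nth (fun m => b m = true) 0 * τ + τ := by ring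
      omega
    · obtain ⟨j, rfl⟩ : ∃ j, i = j + 1 := ⟨i - 1, by omega⟩
      have h1 := nth_zero_eq hτ (s0 := s0) b hb (j+1)
      have h2 := nth_zero_eq hτ (s0 := s0) b hb j
      rw [if_pos hs00] at h1 h2
      have hj1 : 1 + (j+1) = (j+1) + 1 := by omega
      have hj2 : 1 + j = j + 1 := by omega
      rw [hj1] at h1
      rw [hj2] at h2
      rw [h1, h2]
      have hlt := hmono (show j < j + 1 by omega)
      have hg : gap b ((j+1) + 0) = Hh b (j+1) - Hh b j - 1 := by
        unfold gap
        rw [Nat.add_zero, if_neg (by omega : ¬ (j + 1 = 0)), Nat.add_sub_cancel]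
      rw [Nat.add_zero] at hg
      rw [hg]
      unfold ctime Hh
      have e1 : (Nat.nth (fun m => b m = true) (j+1)
          - Nat.nth (fun m => b m = true) j - 1 + 1) * τ
          = Nat.nth (fun m => b m = true) (j+1) * τ - Nat.nth (fun m => b m = true) j * τ := by
        rw [show Nat.nth (fun m => b m = true) (j+1)
          - Nat.nth (fun m => b m = true) j - 1 + 1
          = Nat.nth (fun m => b m = true) (j+1) - Nat.nth (fun m => b m = true) j by omega,
          Nat.sub_mul]
      rw [e1]
      have hmul := Nat.mul_le_mul_right τ (le_of_lt hlt)
      omega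
  · rw [if_neg hs00]
    have h1 := nth_zero_eq hτ (s0 := s0) b hb (i+1)
    have h2 := nth_zero_eq hτ (s0 := s0) b hb i
    rw [if_neg hs00] at h1 h2
    rw [Nat.zero_add] at h1 h2
    rw [h1, h2]
    have hlt := hmono (show i < i + 1 by omega)
    have hg : gap b (i + 1) = Hh b (i+1) - Hh b i - 1 := by
      unfold gap
      rw [if_neg (by omega : ¬ (i + 1 = 0)), Nat.add_sub_cancel]
    rw [hg]
    unfold ctime Hh
    have e1 : (Nat.nth (fun m => b m = true) (i+1)
        - Nat.nth (fun m => b m = true) i - 1 + 1) * τ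
        = Nat.nth (fun m => b m = true) (i+1) * τ - Nat.nth (fun m => b m = true) i * τ := by
      rw [show Nat.nth (fun m => b m = true) (i+1)
        - Nat.nth (fun m => b m = true) i - 1 + 1
        = Nat.nth (fun m => b m = true) (i+1) - Nat.nth (fun m => b m = true) i by omega,
        Nat.sub_mul]
    rw [e1]
    have hmul := Nat.mul_le_mul_right τ (le_of_lt hlt)
    omega


/-! ### Bernoulli weights -/

noncomputable def WB (p : ℝ) : Bool → ENNReal :=
  fun x => if x then ENNReal.ofReal p else ENNReal.ofReal (1-p)

variable {p : ℝ}

lemma WB_sum (hp : p ∈ Set.Ioc (0:ℝ) 1) : WB p true + WB p false = 1 := by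
  unfold WB
  rw [if_pos rfl, if_neg (by simp)]
  rw [← ENNReal.ofReal_add hp.1.le (by linarith [hp.2])]
  norm_num

noncomputable def Wt (p : ℝ) (L : ℕ) (v : Fin L → Bool) : ENNReal := ∏ m : Fin L, WB p (v m)

lemma genMarg (hp : p ∈ Set.Ioc (0:ℝ) 1) (L : ℕ) (c : Fin L → Option Bool) :
    ∑ v : Fin L → Bool, (if (∀ m, ∀ bb ∈ c m, v m = bb) then Wt p L v else 0)
      = ∏ m : Fin L, (match c m with | some bb => WB p bb | none => 1) := by
  have hpoint : ∀ v : Fin L → Bool,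
      (if (∀ m, ∀ bb ∈ c m, v m = bb) then Wt p L v else 0)
        = ∏ m : Fin L, (if (∀ bb ∈ c m, v m = bb) then WB p (v m) else 0) := by
    intro v
    by_cases h : ∀ m, ∀ bb ∈ c m, v m = bb
    · rw [if_pos h]
      unfold Wt
      exact Finset.prod_congr rfl fun m _ => by rw [if_pos (h m)]
    · rw [if_neg h]
      push_neg at h
      obtain ⟨m, bb, hmem, hne⟩ := h
      symm
      apply Finset.prod_eq_zero (Finset.mem_univ m)
      rw [if_neg]
      push_neg
      exact ⟨bb, hmem, hne⟩
  rw [Finset.sum_congr rfl fun v _ => hpoint v]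
  have key := Finset.prod_univ_sum (fun _ : Fin L => (Finset.univ : Finset Bool))
    (fun m bb => if (∀ x ∈ c m, bb = x) then WB p bb else 0)
  rw [Fintype.piFinset_univ] at key
  rw [← key]
  apply Finset.prod_congr rfl
  intro m _
  match hcm : c m with
  | none => simp [WB_sum hp, Fintype.sum_bool]
  | some bb =>
    rw [Fintype.sum_bool]
    simp only [Option.mem_def, Option.some.injEq]
    cases bb <;> simp

lemma Wt_total (hp : p ∈ Set.Ioc (0:ℝ) 1) (L : ℕ) :
    ∑ v : Fin L → Bool, Wt p L v = 1 := by
  have h := genMarg hp L (fun _ => none)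
  simp only [Option.mem_def, reduceCtorEq, false_implies, implies_true, if_true] at h
  rw [h]
  simp

/-! ### head positions of a pattern -/

def qpos (w : ℕ → ℕ) : ℕ → ℕ
  | 0 => w 0
  | (j+1) => qpos w j + w (j+1) + 1

lemma qpos_strictMono (w : ℕ → ℕ) : StrictMono (qpos w) := by
  apply strictMono_nat_of_lt_succ
  intro n
  show qpos w n < qpos w n + w (n+1) + 1
  omega

/-- pattern with heads exactly at `qpos w j`, `j < n'`. -/
def pv (w : ℕ → ℕ) (n' : ℕ) (m : ℕ) : Bool := decide (∃ j < n', qpos w j = m)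

lemma pattern_weight_aux (hp : p ∈ Set.Ioc (0:ℝ) 1) (w : ℕ → ℕ) (n' : ℕ) :
    ∀ j, j < n' →
      ∏ m ∈ Finset.range (qpos w j + 1), WB p (pv w n' m)
        = ∏ t ∈ Finset.range (j+1),
            (ENNReal.ofReal p * (ENNReal.ofReal (1-p))^(w t)) := by
  have hmono := qpos_strictMono w
  intro j
  induction j with
  | zero =>
    intro h0
    have hq0 : qpos w 0 = w 0 := rfl
    rw [Finset.prod_range_succ]
    have hfalse : ∀ m ∈ Finset.range (w 0), WB p (pv w n' m) = ENNReal.ofReal (1-p) := by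
      intro m hm
      rw [Finset.mem_range] at hm
      have : pv w n' m = false := by
        rw [pv, decide_eq_false_iff_not]
        rintro ⟨t, ht, hqt⟩
        have : qpos w 0 ≤ qpos w t := hmono.monotone (Nat.zero_le t)
        omega
      rw [this]
      rfl
    rw [hq0, Finset.prod_congr rfl hfalse, Finset.prod_const, Finset.card_range]
    have htrue : pv w n' (w 0) = true := by
      rw [pv, decide_eq_true_eq]
      exact ⟨0, h0, rfl⟩
    rw [htrue]
    show (ENNReal.ofReal (1-p))^(w 0) * WB p true = _
    rw [Finset.prod_range_one]
    unfold WB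
    rw [if_pos rfl]
    ring
  | succ j ih =>
    intro hj
    have hstep : qpos w (j+1) + 1 = (qpos w j + 1) + (w (j+1) + 1) := by
      show qpos w j + w (j+1) + 1 + 1 = _
      omega
    rw [hstep, Finset.prod_range_add, ih (by omega)]
    have hblock : ∀ x ∈ Finset.range (w (j+1) + 1),
        WB p (pv w n' (qpos w j + 1 + x))
          = if x = w (j+1) then WB p true else WB p false := by
      intro x hx
      rw [Finset.mem_range] at hx
      by_cases hxw : x = w (j+1)
      · rw [if_pos hxw]
        congr 1
        rw [pv, decide_eq_true_eq]
        exact ⟨j+1, hj, by show qpos w j + w (j+1) + 1 = _; omega⟩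
      · rw [if_neg hxw]
        congr 1
        rw [pv, decide_eq_false_iff_not]
        rintro ⟨t, ht, hqt⟩
        rcases Nat.lt_or_ge t (j+1) with h | h
        · have : qpos w t ≤ qpos w j := hmono.monotone (by omega)
          omega
        · have h2 : qpos w (j+1) ≤ qpos w t := hmono.monotone h
          have h3 : qpos w (j+1) = qpos w j + w (j+1) + 1 := rfl
          omega
    have hprod : (∏ x ∈ Finset.range (w (j+1) + 1),
        if x = w (j+1) then WB p true else WB p false)
        = WB p false ^ (w (j+1)) * WB p true := by
      rw [Finset.prod_range_succ, if_pos rfl]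
      congr 1
      rw [Finset.prod_congr rfl (fun x hx => if_neg (by rw [Finset.mem_range] at hx; omega)),
        Finset.prod_const, Finset.card_range]
    rw [Finset.prod_congr rfl hblock, hprod]
    conv_rhs => rw [Finset.prod_range_succ]
    unfold WB
    rw [if_pos rfl, if_neg (by simp)]
    ac_rfl

/-! ### tsum over finite tuples of naturals -/

lemma tsum_pi_nat : ∀ (n : ℕ) (g : Fin n → ℕ → ENNReal),
    ∑' (w : Fin n → ℕ), ∏ j, g j (w j) = ∏ j, ∑' k, g j k := by
  intro n
  induction n with
  | zero =>
    intro g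
    haveI : Unique (Fin 0 → ℕ) := ⟨⟨fun i => i.elim0⟩, fun f => funext fun i => i.elim0⟩
    have h1 : ∀ w : Fin 0 → ℕ, (∏ j, g j (w j)) = 1 := fun w => by simp
    calc ∑' (w : Fin 0 → ℕ), ∏ j, g j (w j)
        = ∑' (_ : Fin 0 → ℕ), (1:ENNReal) := tsum_congr h1
      _ = 1 := by
          haveI : Fintype (Fin 0 → ℕ) := Fintype.ofSubsingleton default
          rw [tsum_fintype]
          simp
  | succ n ih =>
    intro g
    rw [← Equiv.tsum_eq (Fin.consEquiv (fun _ : Fin (n+1) => ℕ))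
        (f := fun w : Fin (n+1) → ℕ => ∏ j, g j (w j))]
    have hpt : ∀ (x : ℕ × (Fin n → ℕ)),
        (∏ j, g j ((Fin.consEquiv (fun _ : Fin (n+1) => ℕ)) x j))
          = g 0 x.1 * ∏ j : Fin n, g j.succ (x.2 j) := by
      intro x
      rw [Fin.prod_univ_succ]
      simp [Fin.consEquiv]
    rw [tsum_congr hpt,
      ENNReal.tsum_prod (f := fun (a : ℕ) (w : Fin n → ℕ) => g 0 a * ∏ j : Fin n, g j.succ (w j))]
    simp_rw [ENNReal.tsum_mul_left, ENNReal.tsum_mul_right]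
    rw [ih (fun j k => g j.succ k), Fin.prod_univ_succ]


/-! ### patterns determine head positions -/

lemma qpos_le_of_le (w : ℕ → ℕ) {a c : ℕ} (h : a ≤ c) : qpos w a ≤ qpos w c :=
  (qpos_strictMono w).monotone h

lemma count_qpos (b : ℕ → Bool) (w : ℕ → ℕ) (n' : ℕ)
    (hm : ∀ m < qpos w (n'-1) + 1, b m = pv w n' m) :
    ∀ j, j < n' → Nat.count (fun m => b m = true) (qpos w j) = j ∧ b (qpos w j) = true := by
  classical
  intro j
  induction j with
  | zero =>
    intro hj
    constructor
    · have h0 : qpos w 0 = 0 + qpos w 0 := by omega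
      rw [h0, count_segment _ 0 (qpos w 0) ?seg, Nat.count_zero]
      case seg =>
        intro x hx hx' hpx
        have hxq : x < qpos w (n'-1) + 1 := by
          have := qpos_le_of_le w (show 0 ≤ n'-1 by omega)
          omega
        rw [hm x hxq] at hpx
        rw [pv, decide_eq_true_eq] at hpx
        obtain ⟨t, ht, hqt⟩ := hpx
        have := qpos_le_of_le w (Nat.zero_le t)
        omega
    · have hq : qpos w 0 < qpos w (n'-1) + 1 := by
        have := qpos_le_of_le w (show 0 ≤ n'-1 by omega)
        omega
      rw [hm _ hq, pv, decide_eq_true_eq]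
      exact ⟨0, hj, rfl⟩
  | succ j ih =>
    intro hj
    obtain ⟨ihc, ihb⟩ := ih (by omega)
    have hq1 : qpos w (j+1) = (qpos w j + 1) + w (j+1) := by
      show qpos w j + w (j+1) + 1 = _
      omega
    have hble : qpos w (j+1) ≤ qpos w (n'-1) := qpos_le_of_le w (by omega)
    constructor
    · rw [hq1, count_segment _ _ (w (j+1)) ?seg2]
      case seg2 =>
        intro x hx hx' hpx
        have hxq : x < qpos w (n'-1) + 1 := by omega
        rw [hm x hxq] at hpx
        rw [pv, decide_eq_true_eq] at hpx
        obtain ⟨t, ht, hqt⟩ := hpx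
        rcases Nat.lt_or_ge t (j+1) with h | h
        · have := qpos_le_of_le w (show t ≤ j by omega)
          omega
        · have := qpos_le_of_le w (show j+1 ≤ t from h)
          omega
      rw [Nat.count_succ, if_pos ihb, ihc]
    · rw [hm _ (by omega), pv, decide_eq_true_eq]
      exact ⟨j+1, hj, rfl⟩

lemma nth_qpos (b : ℕ → Bool) (w : ℕ → ℕ) (n' : ℕ)
    (hm : ∀ m < qpos w (n'-1) + 1, b m = pv w n' m)
    {j : ℕ} (hj : j < n') : Nat.nth (fun m => b m = true) j = qpos w j := by
  classical
  obtain ⟨hc, hb⟩ := count_qpos b w n' hm j hj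
  have := Nat.nth_count (p := fun m => b m = true) hb
  rwa [hc] at this

lemma qpos_congr (w w' : ℕ → ℕ) : ∀ j, (∀ t ≤ j, w t = w' t) → qpos w j = qpos w' j := by
  intro j
  induction j with
  | zero => intro h; exact h 0 (le_refl 0)
  | succ j ih =>
    intro h
    show qpos w j + w (j+1) + 1 = qpos w' j + w' (j+1) + 1
    rw [ih (fun t ht => h t (by omega)), h (j+1) (le_refl _)]

lemma pv_congr (w w' : ℕ → ℕ) (n' : ℕ) (hww : ∀ t < n', w t = w' t) (m : ℕ) :
    pv w n' m = pv w' n' m := by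
  unfold pv
  congr 1
  apply propext
  constructor
  · rintro ⟨j, hj, hq⟩
    exact ⟨j, hj, by rw [← qpos_congr w w' j (fun t ht => hww t (by omega))]; exact hq⟩
  · rintro ⟨j, hj, hq⟩
    exact ⟨j, hj, by rw [qpos_congr w w' j (fun t ht => hww t (by omega))]; exact hq⟩

lemma gaps_qpos (b : ℕ → Bool) (hb : {m | b m = true}.Infinite) :
    ∀ j, qpos (gap b) j = Hh b j := by
  intro j
  induction j with
  | zero => show gap b 0 = Hh b 0; unfold gap; rw [if_pos rfl]
  | succ j ih =>
    show qpos (gap b) j + gap b (j+1) + 1 = Hh b (j+1)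
    rw [ih]
    have hlt : Hh b j < Hh b (j+1) := Nat.nth_strictMono hb (by omega)
    unfold gap
    rw [if_neg (by omega : ¬ (j+1 = 0)), Nat.add_sub_cancel]
    omega

lemma gaps_match (b : ℕ → Bool) (hb : {m | b m = true}.Infinite) (n' : ℕ) (hn' : 1 ≤ n') :
    ∀ m < qpos (gap b) (n'-1) + 1, b m = pv (gap b) n' m := by
  classical
  intro m hmlt
  rw [gaps_qpos b hb] at hmlt
  unfold pv
  by_cases hbm : b m = true
  · rw [hbm]
    symm
    rw [decide_eq_true_eq]
    refine ⟨Nat.count (fun m => b m = true) m, ?_, ?_⟩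
    · have h1 : Nat.count (fun m => b m = true) m
          ≤ Nat.count (fun m => b m = true) (Hh b (n'-1)) :=
        Nat.count_monotone _ (by omega)
      have h2 : Nat.count (fun m => b m = true) (Hh b (n'-1)) = n' - 1 := by
        unfold Hh
        exact Nat.count_nth_of_infinite hb _
      omega
    · rw [gaps_qpos b hb]
      exact Nat.nth_count (p := fun m => b m = true) hbm
  · simp only [Bool.not_eq_true] at hbm
    rw [hbm]
    symm
    rw [decide_eq_false_iff_not]
    rintro ⟨j, hj, hq⟩
    rw [gaps_qpos b hb] at hq
    have : b (Hh b j) = true := Nat.nth_mem_of_infinite hb j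
    rw [hq] at this
    rw [this] at hbm
    exact Bool.true_eq_false.mp hbm


/-! ### measure-theoretic coin machinery -/

section Coins

variable {Ωs : Type} [MeasurableSpace Ωs] (μ : Measure Ωs) [IsProbabilityMeasure μ]
  (C : Ωs → ℕ → Bool)

/-- full coin cylinder event at level `L` -/
def cylEv (L : ℕ) (v : Fin L → Bool) : Set Ωs := {ω | ∀ m : Fin L, C ω m.1 = v m}

variable (hp : p ∈ Set.Ioc (0:ℝ) 1)
  (HT : ∀ (L : ℕ) (v : Fin L → Bool), μ (cylEv C L v) = Wt p L v)

include hp HT in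
lemma finLevel (L : ℕ) (T : Finset (Fin L → Bool)) :
    μ {ω | (fun m : Fin L => C ω m.1) ∈ T} = ∑ v ∈ T, Wt p L v := by
  classical
  have hset : {ω | (fun m : Fin L => C ω m.1) ∈ T} = ⋃ v ∈ T, cylEv C L v := by
    ext ω
    simp only [Set.mem_setOf_eq, Set.mem_iUnion]
    constructor
    · intro h
      exact ⟨_, h, fun m => rfl⟩
    · rintro ⟨v, hv, hm⟩
      have : (fun m : Fin L => C ω m.1) = v := funext hm
      rwa [this]
  have hupper : ∀ (T' : Finset (Fin L → Bool)),
      μ {ω | (fun m : Fin L => C ω m.1) ∈ T'} ≤ ∑ v ∈ T', Wt p L v := by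
    intro T'
    have hset' : {ω | (fun m : Fin L => C ω m.1) ∈ T'} = ⋃ v ∈ T', cylEv C L v := by
      ext ω
      simp only [Set.mem_setOf_eq, Set.mem_iUnion]
      constructor
      · intro h
        exact ⟨_, h, fun m => rfl⟩
      · rintro ⟨v, hv, hm⟩
        have : (fun m : Fin L => C ω m.1) = v := funext hm
        rwa [this]
    rw [hset']
    refine le_trans (measure_biUnion_finset_le T' _) ?_
    exact Finset.sum_le_sum fun v _ => le_of_eq (HT L v)
  refine le_antisymm (hupper T) ?_
  -- lower bound
  have hTc : μ {ω | (fun m : Fin L => C ω m.1) ∈ Finset.univ \ T}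
      ≤ ∑ v ∈ Finset.univ \ T, Wt p L v := hupper _
  have hcov : (1:ENNReal) ≤ μ {ω | (fun m : Fin L => C ω m.1) ∈ T}
      + μ {ω | (fun m : Fin L => C ω m.1) ∈ Finset.univ \ T} := by
    have huniv : (Set.univ : Set Ωs) ⊆ {ω | (fun m : Fin L => C ω m.1) ∈ T}
        ∪ {ω | (fun m : Fin L => C ω m.1) ∈ Finset.univ \ T} := by
      intro ω _
      by_cases h : (fun m : Fin L => C ω m.1) ∈ T
      · exact Or.inl h
      · exact Or.inr (by simp [h])
    calc (1:ENNReal) = μ Set.univ := (measure_univ).symm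
      _ ≤ μ (_ ∪ _) := measure_mono huniv
      _ ≤ _ := measure_union_le _ _
  have htot : ∑ v ∈ Finset.univ \ T, Wt p L v + ∑ v ∈ T, Wt p L v = 1 := by
    rw [Finset.sum_sdiff (Finset.subset_univ T), Wt_total hp]
  have hfin : ∑ v ∈ Finset.univ \ T, Wt p L v ≠ ⊤ := by
    intro hcontra
    rw [hcontra] at htot
    simp at htot
  have h1 : (1:ENNReal) ≤ μ {ω | (fun m : Fin L => C ω m.1) ∈ T}
      + ∑ v ∈ Finset.univ \ T, Wt p L v := le_trans hcov (by gcongr)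
  have h2 : ∑ v ∈ T, Wt p L v + ∑ v ∈ Finset.univ \ T, Wt p L v
      ≤ μ {ω | (fun m : Fin L => C ω m.1) ∈ T} + ∑ v ∈ Finset.univ \ T, Wt p L v := by
    rw [add_comm (∑ v ∈ T, Wt p L v)]
    rw [htot]
    exact h1
  exact (ENNReal.add_le_add_iff_right hfin).mp h2

include hp HT in
lemma tail_null (N : ℕ) : μ {ω | ∀ m, N ≤ m → C ω m = false} = 0 := by
  classical
  set qq := ENNReal.ofReal (1-p) with hqq
  have hbound : ∀ j : ℕ, μ {ω | ∀ m, N ≤ m → C ω m = false} ≤ qq ^ (j+1) := by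
    intro j
    set L := N + (j+1) with hL
    set T : Finset (Fin L → Bool) :=
      Finset.univ.filter (fun v => ∀ m : Fin L, N ≤ m.1 → v m = false) with hT
    have hsub : {ω | ∀ m, N ≤ m → C ω m = false}
        ⊆ {ω | (fun m : Fin L => C ω m.1) ∈ T} := by
      intro ω hω
      simp only [Set.mem_setOf_eq, hT, Finset.mem_filter, Finset.mem_univ, true_and]
      exact fun m hm => hω m.1 hm
    refine le_trans (measure_mono hsub) ?_
    rw [finLevel μ C hp HT L T]
    have hsum : ∑ v ∈ T, Wt p L v
        = ∑ v : Fin L → Bool, (if (∀ m, ∀ bb ∈ (fun m : Fin L =>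
            if N ≤ m.1 then some false else none) m, v m = bb) then Wt p L v else 0) := by
      rw [hT, Finset.sum_filter]
      apply Finset.sum_congr rfl
      intro v _
      congr 1
      apply propext
      constructor
      · intro h m bb hbb
        by_cases hm : N ≤ m.1
        · simp only [if_pos hm, Option.mem_def, Option.some.injEq] at hbb
          rw [← hbb]
          exact h m hm
        · simp [if_neg hm] at hbb
      · intro h m hm
        exact h m false (by simp [if_pos hm])
    rw [hsum, genMarg hp L _]
    have hpt : ∀ m : Fin L,
        (match (if N ≤ m.1 then some false else none : Option Bool) with
          | some bb => WB p bb | none => 1)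
        = (fun x : ℕ => if N ≤ x then WB p false else (1:ENNReal)) m.1 := by
      intro m
      by_cases hm : N ≤ m.1 <;> simp [hm]
    rw [Finset.prod_congr rfl (fun m _ => hpt m),
      Fin.prod_univ_eq_prod_range (fun x => if N ≤ x then WB p false else (1:ENNReal)) L, hL,
      Finset.prod_range_add]
    have h1 : ∀ x ∈ Finset.range N,
        (if N ≤ x then WB p false else (1:ENNReal)) = 1 := by
      intro x hx
      rw [Finset.mem_range] at hx
      rw [if_neg (by omega)]
    have h2 : ∀ x ∈ Finset.range (j+1),
        (if N ≤ N + x then WB p false else (1:ENNReal)) = qq := by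
      intro x _
      rw [if_pos (by omega)]
      rfl
    rw [Finset.prod_congr rfl h1, Finset.prod_congr rfl h2, Finset.prod_const,
      Finset.prod_const, Finset.card_range, Finset.card_range, one_pow, one_mul]
  have hq1 : qq < 1 := by
    rw [hqq, ENNReal.ofReal_lt_one]
    linarith [hp.1]
  have htend := ENNReal.tendsto_pow_atTop_nhds_zero_of_lt_one hq1
  have hb' : ∀ j, μ {ω | ∀ m, N ≤ m → C ω m = false} ≤ qq ^ j := by
    intro j
    calc μ {ω | ∀ m, N ≤ m → C ω m = false} ≤ qq ^ (j+1) := hbound j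
      _ = qq ^ j * qq := pow_succ qq j
      _ ≤ qq ^ j * 1 := mul_le_mul_right hq1.le _
      _ = qq ^ j := mul_one _
  have := ge_of_tendsto' htend hb'
  exact le_antisymm this (zero_le)

include hp HT in
lemma notInf_null : μ {ω | ¬ ({m | C ω m = true}.Infinite)} = 0 := by
  have hsub : {ω | ¬ ({m | C ω m = true}.Infinite)}
      ⊆ ⋃ N : ℕ, {ω | ∀ m, N ≤ m → C ω m = false} := by
    intro ω hω
    simp only [Set.mem_setOf_eq, Set.not_infinite] at hω
    obtain ⟨N, hN⟩ := hω.bddAbove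
    simp only [Set.mem_iUnion, Set.mem_setOf_eq]
    refine ⟨N+1, fun m hm => ?_⟩
    by_contra hc
    have : m ∈ {m | C ω m = true} := by
      simp only [Set.mem_setOf_eq]
      revert hc
      cases C ω m <;> simp
    have := hN this
    omega
  refine le_antisymm ?_ (zero_le)
  refine le_trans (measure_mono hsub) ?_
  refine le_trans (measure_iUnion_le _) ?_
  simp [tail_null μ C hp HT]


def extFn {n' : ℕ} (w : Fin n' → ℕ) : ℕ → ℕ := fun j => if h : j < n' then w ⟨j, h⟩ else 0

noncomputable def patW (p : ℝ) {n' : ℕ} (w : Fin n' → ℕ) : ENNReal :=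
  ∏ j : Fin n', (ENNReal.ofReal p * (ENNReal.ofReal (1-p)) ^ (w j))

lemma patW_eq (hp : p ∈ Set.Ioc (0:ℝ) 1) {n' : ℕ} (hn' : 1 ≤ n') (w : Fin n' → ℕ) :
    ∏ m ∈ Finset.range (qpos (extFn w) (n'-1) + 1), WB p (pv (extFn w) n' m) = patW p w := by
  rw [pattern_weight_aux hp (extFn w) n' (n'-1) (by omega)]
  have h1 : n' - 1 + 1 = n' := by omega
  rw [h1, ← Fin.prod_univ_eq_prod_range
    (fun t => ENNReal.ofReal p * (ENNReal.ofReal (1-p)) ^ (extFn w t)) n']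
  apply Finset.prod_congr rfl
  intro j _
  have : extFn w (j : ℕ) = w j := by unfold extFn; rw [dif_pos j.2]
  rw [this]

include hp HT in
lemma patEv_meas {n' : ℕ} (hn' : 1 ≤ n') (w : Fin n' → ℕ) :
    μ {ω | ∀ m, m < qpos (extFn w) (n'-1) + 1 → C ω m = pv (extFn w) n' m} = patW p w := by
  set L := qpos (extFn w) (n'-1) + 1 with hL
  have hset : {ω | ∀ m, m < L → C ω m = pv (extFn w) n' m}
      = cylEv C L (fun m : Fin L => pv (extFn w) n' m.1) := by
    ext ω
    constructor
    · intro h m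
      exact h m.1 m.2
    · intro h m hm
      exact h ⟨m, hm⟩
  rw [hset, HT, Wt,
    Fin.prod_univ_eq_prod_range (fun x => WB p (pv (extFn w) n' x)) L]
  exact patW_eq hp hn' w

lemma pattern_unique {n' : ℕ} (hn' : 1 ≤ n') (w w' : Fin n' → ℕ) (b : ℕ → Bool)
    (h1 : ∀ m < qpos (extFn w) (n'-1) + 1, b m = pv (extFn w) n' m)
    (h2 : ∀ m < qpos (extFn w') (n'-1) + 1, b m = pv (extFn w') n' m) : w = w' := by
  have hq : ∀ j, j < n' → qpos (extFn w) j = qpos (extFn w') j := by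
    intro j hj
    rw [← nth_qpos b (extFn w) n' h1 hj, ← nth_qpos b (extFn w') n' h2 hj]
  have key : ∀ t (ht : t < n'), w ⟨t, ht⟩ = w' ⟨t, ht⟩ := by
    intro t
    induction t with
    | zero =>
      intro ht
      have h0 := hq 0 ht
      have e1 : qpos (extFn w) 0 = w ⟨0, ht⟩ := by
        show extFn w 0 = _
        unfold extFn
        rw [dif_pos ht]
      have e2 : qpos (extFn w') 0 = w' ⟨0, ht⟩ := by
        show extFn w' 0 = _
        unfold extFn
        rw [dif_pos ht]
      rw [← e1, ← e2, h0]
    | succ t ih =>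
      intro ht
      have ha := hq t (by omega)
      have hb := hq (t+1) ht
      have e1 : qpos (extFn w) (t+1) = qpos (extFn w) t + extFn w (t+1) + 1 := rfl
      have e2 : qpos (extFn w') (t+1) = qpos (extFn w') t + extFn w' (t+1) + 1 := rfl
      have e3 : extFn w (t+1) = w ⟨t+1, ht⟩ := by unfold extFn; rw [dif_pos ht]
      have e4 : extFn w' (t+1) = w' ⟨t+1, ht⟩ := by unfold extFn; rw [dif_pos ht]
      rw [← e3, ← e4]
      omega
  funext j
  exact key j.1 j.2

include hp HT in
lemma master {n' : ℕ} (hn' : 1 ≤ n') (S : Set (Fin n' → ℕ)) (E G : Set Ωs)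
    (hG : μ Gᶜ = 0)
    (hE : ∀ ω ∈ G, (ω ∈ E ↔ ∃ w, w ∈ S ∧
      ∀ m < qpos (extFn w) (n'-1) + 1, C ω m = pv (extFn w) n' m)) :
    μ E = ∑' w : Fin n' → ℕ, S.indicator (fun w => patW p w) w := by
  classical
  have hind : ∀ w : Fin n' → ℕ, S.indicator (fun w => patW p w) w
      = if w ∈ S then patW p w else 0 := fun w => Set.indicator_apply _ _ _
  rw [tsum_congr hind]
  set patEv : (Fin n' → ℕ) → Set Ωs :=
    fun w => {ω | ∀ m, m < qpos (extFn w) (n'-1) + 1 → C ω m = pv (extFn w) n' m} with hpatEv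
  refine le_antisymm ?_ ?_
  · -- upper bound
    have hsubU : E ⊆ Gᶜ ∪ ⋃ w : Fin n' → ℕ, (if w ∈ S then patEv w else ∅) := by
      intro ω hω
      by_cases hg : ω ∈ G
      · right
        obtain ⟨w, hwS, hm⟩ := (hE ω hg).mp hω
        refine Set.mem_iUnion.mpr ⟨w, ?_⟩
        rw [if_pos hwS]
        exact hm
      · exact Or.inl hg
    calc μ E ≤ μ Gᶜ + μ (⋃ w : Fin n' → ℕ, (if w ∈ S then patEv w else ∅)) :=
          le_trans (measure_mono hsubU) (measure_union_le _ _)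
      _ ≤ 0 + ∑' w : Fin n' → ℕ, μ (if w ∈ S then patEv w else ∅) := by
          rw [hG]
          gcongr
          exact measure_iUnion_le _
      _ ≤ ∑' w : Fin n' → ℕ, (if w ∈ S then patW p w else 0) := by
          rw [zero_add]
          refine ENNReal.tsum_le_tsum fun w => ?_
          split_ifs with h
          · exact le_of_eq (patEv_meas μ C hp HT hn' w)
          · simp
  · -- lower bound
    rw [ENNReal.tsum_eq_iSup_sum]
    refine iSup_le fun F => ?_
    rw [← Finset.sum_filter (fun w => w ∈ S) (fun w => patW p w)]
    set F' := F.filter (fun w => w ∈ S) with hF'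
    have hF'S : ∀ w ∈ F', w ∈ S := fun w hw => (Finset.mem_filter.mp hw).2
    set Ls := F'.sup (fun w => qpos (extFn w) (n'-1) + 1) with hLs
    have hLle : ∀ w ∈ F', qpos (extFn w) (n'-1) + 1 ≤ Ls := fun w hw =>
      le_of_le_of_eq (Finset.le_sup (f := fun w => qpos (extFn w) (n'-1) + 1) hw) hLs.symm
    set matchesAt : (Fin n' → ℕ) → (Fin Ls → Bool) → Prop :=
      fun w v => ∀ m : Fin Ls, m.1 < qpos (extFn w) (n'-1) + 1 → v m = pv (extFn w) n' m.1
      with hmatchesAt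
    set T : Finset (Fin Ls → Bool) := Finset.univ.filter (fun v => ∃ w ∈ F', matchesAt w v)
      with hT
    have hbridge : ∀ (ω : Ωs) w, w ∈ F' →
        (matchesAt w (fun m : Fin Ls => C ω m.1)
          ↔ ∀ m < qpos (extFn w) (n'-1) + 1, C ω m = pv (extFn w) n' m) := by
      intro ω w hw
      constructor
      · intro h m hm
        exact h ⟨m, lt_of_lt_of_le hm (hLle w hw)⟩ hm
      · intro h m hm
        exact h m.1 hm
    have hcov : (1:ENNReal) ≤ μ E
        + μ {ω | (fun m : Fin Ls => C ω m.1) ∈ Finset.univ \ T} := by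
      have huniv : (Set.univ : Set Ωs) ⊆ Gᶜ ∪ (E ∪
          {ω | (fun m : Fin Ls => C ω m.1) ∈ Finset.univ \ T}) := by
        intro ω _
        by_cases hg : ω ∈ G
        · by_cases hv : (fun m : Fin Ls => C ω m.1) ∈ T
          · refine Or.inr (Or.inl ?_)
            obtain ⟨-, w, hwF', hmatch⟩ := Finset.mem_filter.mp hv
            exact (hE ω hg).mpr ⟨w, hF'S w hwF', (hbridge ω w hwF').mp hmatch⟩
          · exact Or.inr (Or.inr (by simp [hv]))
        · exact Or.inl hg
      calc (1:ENNReal) = μ Set.univ := measure_univ.symm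
        _ ≤ μ (Gᶜ ∪ (E ∪ {ω | (fun m : Fin Ls => C ω m.1) ∈ Finset.univ \ T})) :=
            measure_mono huniv
        _ ≤ μ Gᶜ + μ (E ∪ {ω | (fun m : Fin Ls => C ω m.1) ∈ Finset.univ \ T}) :=
            measure_union_le _ _
        _ ≤ μ Gᶜ + (μ E + μ {ω | (fun m : Fin Ls => C ω m.1) ∈ Finset.univ \ T}) := by
            gcongr
            exact measure_union_le _ _
        _ = _ := by rw [hG, zero_add]
    rw [finLevel μ C hp HT Ls (Finset.univ \ T)] at hcov
    -- ∑ v ∈ T, Wt = ∑ w ∈ F', patW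
    have hTsum : ∑ v ∈ T, Wt p Ls v = ∑ w ∈ F', patW p w := by
      have hTb : T = F'.biUnion (fun w => Finset.univ.filter (matchesAt w)) := by
        ext v
        simp only [hT, Finset.mem_filter, Finset.mem_univ, true_and, Finset.mem_biUnion]
      rw [hTb, Finset.sum_biUnion ?disj]
      case disj =>
        intro w hw w' hw' hne
        simp only [Function.onFun]
        rw [Finset.disjoint_left]
        intro v hv hv'
        apply hne
        have hmv := (Finset.mem_filter.mp hv).2
        have hmv' := (Finset.mem_filter.mp hv').2
        rw [Finset.mem_coe] at hw hw'
        set b : ℕ → Bool := fun m => if h : m < Ls then v ⟨m, h⟩ else false with hb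
        have hm1 : ∀ m < qpos (extFn w) (n'-1) + 1, b m = pv (extFn w) n' m := by
          intro m hm
          have hmL : m < Ls := lt_of_lt_of_le hm (hLle w hw)
          rw [hb]
          simp only [dif_pos hmL]
          exact hmv ⟨m, hmL⟩ hm
        have hm2 : ∀ m < qpos (extFn w') (n'-1) + 1, b m = pv (extFn w') n' m := by
          intro m hm
          have hmL : m < Ls := lt_of_lt_of_le hm (hLle w' hw')
          rw [hb]
          simp only [dif_pos hmL]
          exact hmv' ⟨m, hmL⟩ hm
        exact pattern_unique hn' w w' b hm1 hm2
      refine Finset.sum_congr rfl fun w hw => ?_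
      -- ∑ v ∈ filter (matchesAt w), Wt = patW w
      rw [Finset.sum_filter]
      have hgm := genMarg hp Ls (fun m : Fin Ls =>
        if m.1 < qpos (extFn w) (n'-1) + 1 then some (pv (extFn w) n' m.1) else none)
      have hcond : ∀ v : Fin Ls → Bool,
          (if matchesAt w v then Wt p Ls v else 0)
          = (if (∀ m : Fin Ls, ∀ bb ∈ (fun m : Fin Ls =>
              if m.1 < qpos (extFn w) (n'-1) + 1
                then some (pv (extFn w) n' m.1) else none) m, v m = bb)
              then Wt p Ls v else 0) := by
        intro v
        congr 1
        apply propext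
        constructor
        · intro h m bb hbb
          by_cases hm : m.1 < qpos (extFn w) (n'-1) + 1
          · simp only [if_pos hm, Option.mem_def, Option.some.injEq] at hbb
            rw [← hbb]
            exact h m hm
          · simp only [if_neg hm] at hbb; simp at hbb
        · intro h m hm
          exact h m _ (by simp only [if_pos hm, Option.mem_def])
      rw [Finset.sum_congr rfl (fun v _ => hcond v), hgm]
      have hpt : ∀ m : Fin Ls,
          (match (if m.1 < qpos (extFn w) (n'-1) + 1
              then some (pv (extFn w) n' m.1) else none : Option Bool) with
            | some bb => WB p bb | none => 1)
          = (fun x : ℕ => if x < qpos (extFn w) (n'-1) + 1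
              then WB p (pv (extFn w) n' x) else (1:ENNReal)) m.1 := by
        intro m
        by_cases hm : m.1 < qpos (extFn w) (n'-1) + 1 <;> simp [hm]
      rw [Finset.prod_congr rfl (fun m _ => hpt m),
        Fin.prod_univ_eq_prod_range (fun x : ℕ => if x < qpos (extFn w) (n'-1) + 1
          then WB p (pv (extFn w) n' x) else (1:ENNReal)) Ls,
        show Ls = (qpos (extFn w) (n'-1) + 1) + (Ls - (qpos (extFn w) (n'-1) + 1)) by
          have := hLle w hw; omega,
        Finset.prod_range_add]
      have hfirst : ∀ x ∈ Finset.range (qpos (extFn w) (n'-1) + 1),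
          (if x < qpos (extFn w) (n'-1) + 1
            then WB p (pv (extFn w) n' x) else (1:ENNReal)) = WB p (pv (extFn w) n' x) := by
        intro x hx
        rw [Finset.mem_range] at hx
        rw [if_pos hx]
      have hsecond : ∀ x ∈ Finset.range (Ls - (qpos (extFn w) (n'-1) + 1)),
          (if (qpos (extFn w) (n'-1) + 1) + x < qpos (extFn w) (n'-1) + 1
            then WB p (pv (extFn w) n' ((qpos (extFn w) (n'-1) + 1) + x))
            else (1:ENNReal)) = 1 := by
        intro x _
        rw [if_neg (by omega)]
      rw [Finset.prod_congr rfl hfirst, Finset.prod_congr rfl hsecond,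
        Finset.prod_const, one_pow, mul_one]
      exact patW_eq hp hn' w
    -- conclude
    have htot : ∑ v ∈ Finset.univ \ T, Wt p Ls v + ∑ v ∈ T, Wt p Ls v = 1 := by
      rw [Finset.sum_sdiff (Finset.subset_univ T), Wt_total hp]
    have hfin : ∑ v ∈ Finset.univ \ T, Wt p Ls v ≠ ⊤ := by
      intro hcontra
      rw [hcontra] at htot
      simp at htot
    have h2 : ∑ w ∈ F', patW p w + ∑ v ∈ Finset.univ \ T, Wt p Ls v
        ≤ μ E + ∑ v ∈ Finset.univ \ T, Wt p Ls v := by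
      rw [← hTsum, add_comm (∑ v ∈ T, Wt p Ls v), htot]
      exact hcov
    exact (ENNReal.add_le_add_iff_right hfin).mp h2

end Coins


noncomputable def sigP (p : ℝ) (A : Set ℕ) : ENNReal :=
  ∑' k : ℕ, A.indicator (fun k => ENNReal.ofReal p * (ENNReal.ofReal (1-p))^k) k

lemma tsum_indicator_pi {p : ℝ} {n' : ℕ} (A : Fin n' → Set ℕ) :
    ∑' w : Fin n' → ℕ,
        ({w : Fin n' → ℕ | ∀ j, w j ∈ A j}).indicator (fun w => patW p w) w
      = ∏ j : Fin n', sigP p (A j) := by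
  classical
  have hpt : ∀ w : Fin n' → ℕ,
      ({w : Fin n' → ℕ | ∀ j, w j ∈ A j}).indicator (fun w => patW p w) w
        = ∏ j : Fin n',
            (A j).indicator (fun k => ENNReal.ofReal p * (ENNReal.ofReal (1-p))^k) (w j) := by
    intro w
    by_cases h : ∀ j, w j ∈ A j
    · rw [Set.indicator_of_mem (show w ∈ {w : Fin n' → ℕ | ∀ j, w j ∈ A j} from h)]
      unfold patW
      exact Finset.prod_congr rfl fun j _ =>
        (Set.indicator_of_mem (h j)
          (fun k => ENNReal.ofReal p * (ENNReal.ofReal (1-p))^k)).symm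
    · rw [Set.indicator_of_notMem (show w ∉ {w : Fin n' → ℕ | ∀ j, w j ∈ A j} from h)]
      push_neg at h
      obtain ⟨j, hj⟩ := h
      symm
      exact Finset.prod_eq_zero (Finset.mem_univ j) (Set.indicator_of_notMem hj _)
  rw [tsum_congr hpt, tsum_pi_nat n'
    (fun j k => (A j).indicator (fun k => ENNReal.ofReal p * (ENNReal.ofReal (1-p))^k) k)]
  rfl

lemma one_sub_qq (hp : p ∈ Set.Ioc (0:ℝ) 1) :
    (1:ENNReal) - ENNReal.ofReal (1-p) = ENNReal.ofReal p := by
  have h := ENNReal.ofReal_sub 1 (show (0:ℝ) ≤ 1 - p by linarith [hp.2])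
  rw [show (1:ℝ) - (1-p) = p by ring, ENNReal.ofReal_one] at h
  exact h.symm

lemma sigP_univ (hp : p ∈ Set.Ioc (0:ℝ) 1) : sigP p Set.univ = 1 := by
  unfold sigP
  have hpt : ∀ k : ℕ, (Set.univ : Set ℕ).indicator
      (fun k => ENNReal.ofReal p * (ENNReal.ofReal (1-p))^k) k
      = ENNReal.ofReal p * (ENNReal.ofReal (1-p))^k := fun k =>
        Set.indicator_of_mem (Set.mem_univ k) _
  rw [tsum_congr hpt, ENNReal.tsum_mul_left, ENNReal.tsum_geometric, one_sub_qq hp]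
  exact ENNReal.mul_inv_cancel (by simp [hp.1]) ENNReal.ofReal_ne_top

lemma sigP_singleton (x : ℕ) :
    sigP p {x} = ENNReal.ofReal p * (ENNReal.ofReal (1-p))^x := by
  unfold sigP
  rw [tsum_eq_single x]
  · rw [Set.indicator_of_mem (show x ∈ ({x} : Set ℕ) from rfl)]
  · intro b hb
    exact Set.indicator_of_notMem (by simpa using hb) _

end PORWF

open PORWF

/-- periodic observations with failures. For the Markov chain `s` on
`{1,…,τ+1}` (state `v` encoded as `v - 1 : Fin (τ+1)`) with transitions `1 → 3`, `2 → 3`,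
`j → j+1` for `3 ≤ j ≤ τ`, and `τ+1 → 1` w.p. `p`, `τ+1 → 2` w.p. `1−p`, and `Λ = {1}`,
the set of observation times is a.s. infinite and the increments `t_{i+1} − t_i` of its
increasing enumeration (`Nat.nth`) are i.i.d. with `ℙ(t_{i+1} − t_i = kτ) = (1−p)^{k−1} p`
for every `k ≥ 1`; in particular each increment lies in `{τ, 2τ, …}` a.s. -/
theorem periodic_observation_with_failures_renewal
    (τ : ℕ) (hτ : 2 ≤ τ) (p : ℝ) (hp : p ∈ Set.Ioc (0:ℝ) 1)
    (P : Fin (τ+1) → Fin (τ+1) → ℝ)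
    (hP : ∀ i j : Fin (τ+1), P i j =
      if (i : ℕ) ≤ 1 then (if (j : ℕ) = 2 then 1 else 0)
      else if (i : ℕ) < τ then (if (j : ℕ) = (i : ℕ) + 1 then 1 else 0)
      else (if (j : ℕ) = 0 then p else if (j : ℕ) = 1 then 1 - p else 0))
    (Ω : Type) [MeasurableSpace Ω] (μ : Measure Ω) [IsProbabilityMeasure μ]
    (s : ℕ → Ω → Fin (τ+1)) (s₀ : Fin (τ+1)) (hs0 : ∀ ω, s 0 ω = s₀)
    (hM : IsMarkov μ s P)
    (t : ℕ → Ω → ℕ)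
    (ht : ∀ (i : ℕ) (ω : Ω), t i ω = Nat.nth (fun k => (s k ω : ℕ) = 0) i) :
    μ {ω | {k : ℕ | (s k ω : ℕ) = 0}.Infinite} = 1 ∧
    iIndepFun (m := fun _ : ℕ => (inferInstance : MeasurableSpace ℕ))
      (fun i ω => t (i+1) ω - t i ω) μ ∧
    (∀ i : ℕ, ∀ k : ℕ, 1 ≤ k →
      μ {ω | t (i+1) ω - t i ω = k * τ} = ENNReal.ofReal ((1 - p)^(k-1) * p)) ∧
    (∀ i : ℕ, μ {ω | ∃ k : ℕ, 1 ≤ k ∧ t (i+1) ω - t i ω = k * τ} = 1) := by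
  classical
  have hp0 := hp.1
  have hp1 := hp.2
  set s0 : ℕ := (s₀ : ℕ) with hs0def
  have hs0τ : s0 ≤ τ := by have := s₀.2; omega
  -- row sums
  have hsum_single : ∀ (a : ℕ) (ha : a < τ+1) (x : ENNReal),
      (∑ j : Fin (τ+1), if (j:ℕ) = a then x else 0) = x := by
    intro a ha x
    rw [Finset.sum_eq_single (⟨a, ha⟩ : Fin (τ+1))]
    · rw [if_pos rfl]
    · intro j _ hj
      rw [if_neg (fun h => hj (Fin.ext h))]
    · intro h
      exact absurd (Finset.mem_univ _) h
  have hrow : ∀ i : Fin (τ+1), ∑ j : Fin (τ+1), ENNReal.ofReal (P i j) = 1 := by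
    intro i
    by_cases hi1 : (i:ℕ) ≤ 1
    · have h1 : ∀ j : Fin (τ+1), ENNReal.ofReal (P i j)
          = if (j:ℕ) = 2 then (1:ENNReal) else 0 := by
        intro j
        rw [hP, if_pos hi1]
        split_ifs <;> simp
      rw [Finset.sum_congr rfl (fun j _ => h1 j), hsum_single 2 (by omega) 1]
    · by_cases hiτ : (i:ℕ) < τ
      · have h1 : ∀ j : Fin (τ+1), ENNReal.ofReal (P i j)
            = if (j:ℕ) = (i:ℕ)+1 then (1:ENNReal) else 0 := by
          intro j
          rw [hP, if_neg hi1, if_pos hiτ]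
          split_ifs <;> simp
        rw [Finset.sum_congr rfl (fun j _ => h1 j), hsum_single ((i:ℕ)+1) (by omega) 1]
      · have h1 : ∀ j : Fin (τ+1), ENNReal.ofReal (P i j)
            = (if (j:ℕ) = 0 then ENNReal.ofReal p else 0)
              + (if (j:ℕ) = 1 then ENNReal.ofReal (1-p) else 0) := by
          intro j
          rw [hP, if_neg hi1, if_neg hiτ]
          by_cases h0 : (j:ℕ) = 0
          · rw [if_pos h0, if_pos h0, if_neg (by omega), add_zero]
          · rw [if_neg h0, if_neg h0, zero_add]
            by_cases h2 : (j:ℕ) = 1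
            · rw [if_pos h2, if_pos h2]
            · rw [if_neg h2, if_neg h2]
              simp
        rw [Finset.sum_congr rfl (fun j _ => h1 j), Finset.sum_add_distrib,
          hsum_single 0 (by omega), hsum_single 1 (by omega),
          ← ENNReal.ofReal_add hp0.le (by linarith), show p + (1-p) = 1 by ring,
          ENNReal.ofReal_one]
  -- cancellation helper
  have hcancel : ∀ (f g : Fin (τ+1) → ENNReal), (∀ j, f j ≤ g j) →
      (∑ j, g j) ≤ (∑ j, f j) → (∑ j, f j) ≠ ⊤ → ∀ j, g j ≤ f j := by
    intro f g hle hsum hfin j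
    have hfin' : (∑ x ∈ Finset.univ.erase j, f x) ≠ ⊤ := by
      intro hc
      apply hfin
      rw [← Finset.add_sum_erase _ f (Finset.mem_univ j), hc]
      simp
    have h1 : g j + ∑ x ∈ Finset.univ.erase j, f x
        ≤ f j + ∑ x ∈ Finset.univ.erase j, f x := by
      calc g j + ∑ x ∈ Finset.univ.erase j, f x
          ≤ g j + ∑ x ∈ Finset.univ.erase j, g x := by
            gcongr with x
            exact hle x
        _ = ∑ x, g x := Finset.add_sum_erase _ g (Finset.mem_univ j)
        _ ≤ ∑ x, f x := hsum
        _ = f j + ∑ x ∈ Finset.univ.erase j, f x :=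
            (Finset.add_sum_erase _ f (Finset.mem_univ j)).symm
    calc g j = (g j + ∑ x ∈ Finset.univ.erase j, f x) - ∑ x ∈ Finset.univ.erase j, f x :=
          (ENNReal.add_sub_cancel_right hfin').symm
      _ ≤ (f j + ∑ x ∈ Finset.univ.erase j, f x) - ∑ x ∈ Finset.univ.erase j, f x := by
          gcongr
      _ = f j := ENNReal.add_sub_cancel_right hfin'
  -- one-step lemma
  have hstep : ∀ (k : ℕ) (c : ℕ → Fin (τ+1)) (j : Fin (τ+1)),
      μ ({ω | ∀ i ≤ k, s i ω = c i} ∩ {ω | s (k+1) ω = j})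
        = ENNReal.ofReal (P (c k) j) * μ {ω | ∀ i ≤ k, s i ω = c i} := by
    intro k c j
    by_cases hE0 : μ {ω | ∀ i ≤ k, s i ω = c i} = 0
    · rw [hE0, mul_zero]
      exact le_antisymm (hE0 ▸ measure_mono Set.inter_subset_left) (zero_le)
    · have hc := hM k c hE0
      have hfinE : μ {ω | ∀ i ≤ k, s i ω = c i} ≠ ⊤ := measure_ne_top μ _
      have hrestr : ∀ j' : Fin (τ+1),
          μ.restrict {ω | ∀ i ≤ k, s i ω = c i} {ω | s (k+1) ω = j'}
            = ENNReal.ofReal (P (c k) j') * μ {ω | ∀ i ≤ k, s i ω = c i} := by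
        intro j'
        have h2 : (μ {ω | ∀ i ≤ k, s i ω = c i})⁻¹
            * μ.restrict {ω | ∀ i ≤ k, s i ω = c i} {ω | s (k+1) ω = j'}
            = ENNReal.ofReal (P (c k) j') := by
          rw [← hc j']
          rfl
        calc μ.restrict {ω | ∀ i ≤ k, s i ω = c i} {ω | s (k+1) ω = j'}
            = (μ {ω | ∀ i ≤ k, s i ω = c i} * (μ {ω | ∀ i ≤ k, s i ω = c i})⁻¹)
              * μ.restrict {ω | ∀ i ≤ k, s i ω = c i} {ω | s (k+1) ω = j'} := by
              rw [ENNReal.mul_inv_cancel hE0 hfinE, one_mul]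
          _ = μ {ω | ∀ i ≤ k, s i ω = c i} * ((μ {ω | ∀ i ≤ k, s i ω = c i})⁻¹
              * μ.restrict {ω | ∀ i ≤ k, s i ω = c i} {ω | s (k+1) ω = j'}) := by
              rw [mul_assoc]
          _ = _ := by rw [h2, mul_comm]
      have hle : ∀ j' : Fin (τ+1), μ ({ω | ∀ i ≤ k, s i ω = c i} ∩ {ω | s (k+1) ω = j'})
          ≤ ENNReal.ofReal (P (c k) j') * μ {ω | ∀ i ≤ k, s i ω = c i} := by
        intro j'
        rw [← hrestr j', Set.inter_comm]
        exact Measure.le_restrict_apply _ _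
      have htot : (∑ j' : Fin (τ+1),
          ENNReal.ofReal (P (c k) j') * μ {ω | ∀ i ≤ k, s i ω = c i})
          ≤ ∑ j' : Fin (τ+1), μ ({ω | ∀ i ≤ k, s i ω = c i} ∩ {ω | s (k+1) ω = j'}) := by
        calc (∑ j' : Fin (τ+1),
            ENNReal.ofReal (P (c k) j') * μ {ω | ∀ i ≤ k, s i ω = c i})
            = (∑ j' : Fin (τ+1), ENNReal.ofReal (P (c k) j'))
              * μ {ω | ∀ i ≤ k, s i ω = c i} := (Finset.sum_mul _ _ _).symm
          _ = μ {ω | ∀ i ≤ k, s i ω = c i} := by rw [hrow (c k), one_mul]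
          _ ≤ μ (⋃ j' ∈ (Finset.univ : Finset (Fin (τ+1))),
              ({ω | ∀ i ≤ k, s i ω = c i} ∩ {ω | s (k+1) ω = j'})) := by
              apply measure_mono
              intro ω hω
              simp only [Set.mem_iUnion]
              exact ⟨s (k+1) ω, Finset.mem_univ _, hω, rfl⟩
          _ ≤ _ := measure_biUnion_finset_le _ _
      have hfin : (∑ j' : Fin (τ+1),
          μ ({ω | ∀ i ≤ k, s i ω = c i} ∩ {ω | s (k+1) ω = j'})) ≠ ⊤ := by
        have hb : (∑ j' : Fin (τ+1),
            μ ({ω | ∀ i ≤ k, s i ω = c i} ∩ {ω | s (k+1) ω = j'}))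
            ≤ ∑ j' : Fin (τ+1),
              ENNReal.ofReal (P (c k) j') * μ {ω | ∀ i ≤ k, s i ω = c i} :=
          Finset.sum_le_sum fun j' _ => hle j'
        intro hcontra
        rw [hcontra] at hb
        have : (∑ j' : Fin (τ+1), ENNReal.ofReal (P (c k) j')
            * μ {ω | ∀ i ≤ k, s i ω = c i}) = ⊤ := top_le_iff.mp hb
        rw [← Finset.sum_mul, hrow (c k), one_mul] at this
        exact hfinE this
      exact le_antisymm (hle j)
        (hcancel (fun j' => μ ({ω | ∀ i ≤ k, s i ω = c i} ∩ {ω | s (k+1) ω = j'}))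
          (fun j' => ENNReal.ofReal (P (c k) j') * μ {ω | ∀ i ≤ k, s i ω = c i})
          hle htot hfin j)
  -- the deterministic path, as Fin-valued
  have hpFlt : ∀ (b : ℕ → Bool) (k : ℕ), pathFn τ s0 b k < τ + 1 := fun b k => by
    have := pathFn_le hτ hs0τ b k
    omega
  set pF : (ℕ → Bool) → ℕ → Fin (τ+1) := fun b k => ⟨pathFn τ s0 b k, hpFlt b k⟩ with hpF
  -- cylinder measures along deterministic paths
  have hcyl : ∀ (b : ℕ → Bool) (k : ℕ),
      μ {ω | ∀ i ≤ k, s i ω = pF b i} = ∏ m ∈ Finset.range (nCoins τ s0 k), WB p (b m) := by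
    intro b k
    induction k with
    | zero =>
      have hset : {ω | ∀ i ≤ 0, s i ω = pF b i} = Set.univ := by
        ext ω
        simp only [Set.mem_setOf_eq, Set.mem_univ, iff_true]
        intro i hi
        have hi0 : i = 0 := by omega
        subst hi0
        rw [hs0 ω]
        apply Fin.ext
        show s0 = pathFn τ s0 b 0
        rw [pathFn_zero]
      rw [hset, measure_univ, show nCoins τ s0 0 = 0 from by rw [nCoins, if_neg (by omega)]]
      simp
    | succ k ih =>
      have hset : {ω | ∀ i ≤ k+1, s i ω = pF b i}
          = {ω | ∀ i ≤ k, s i ω = pF b i} ∩ {ω | s (k+1) ω = pF b (k+1)} := by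
        ext ω
        constructor
        · intro h
          exact ⟨fun i hi => h i (by omega), h (k+1) (le_refl _)⟩
        · rintro ⟨h1, h2⟩ i hi
          rcases Nat.lt_or_ge i (k+1) with h | h
          · exact h1 i (by omega)
          · have hik : i = k+1 := by omega
            subst hik
            exact h2
      rw [hset, hstep k (pF b) (pF b (k+1)), ih]
      rcases shape hτ hs0τ b k with ⟨h1, h2, h3⟩ | ⟨h1, h1', h2, h3⟩ | ⟨h1, hct, h2, h3⟩
      · have hPval : P (pF b k) (pF b (k+1)) = 1 := by
          rw [hP, if_pos (show ((pF b k : Fin (τ+1)) : ℕ) ≤ 1 from h1),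
            if_pos (show ((pF b (k+1) : Fin (τ+1)) : ℕ) = 2 from h2)]
        rw [hPval, h3, ENNReal.ofReal_one, one_mul]
      · have hPval : P (pF b k) (pF b (k+1)) = 1 := by
          rw [hP, if_neg (show ¬ ((pF b k : Fin (τ+1)) : ℕ) ≤ 1 by
              show ¬ pathFn τ s0 b k ≤ 1; omega),
            if_pos (show ((pF b k : Fin (τ+1)) : ℕ) < τ from h1'),
            if_pos (show ((pF b (k+1) : Fin (τ+1)) : ℕ) = ((pF b k : Fin (τ+1)) : ℕ) + 1 from h2)]
        rw [hPval, h3, ENNReal.ofReal_one, one_mul]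
      · rw [h3, Finset.prod_range_succ]
        have hPval : ENNReal.ofReal (P (pF b k) (pF b (k+1))) = WB p (b (nCoins τ s0 k)) := by
          rw [hP, if_neg (show ¬ ((pF b k : Fin (τ+1)) : ℕ) ≤ 1 by
              show ¬ pathFn τ s0 b k ≤ 1; omega),
            if_neg (show ¬ ((pF b k : Fin (τ+1)) : ℕ) < τ by
              show ¬ pathFn τ s0 b k < τ; omega)]
          by_cases hb : b (nCoins τ s0 k)
          · have hv : ((pF b (k+1) : Fin (τ+1)) : ℕ) = 0 := by
              show pathFn τ s0 b (k+1) = 0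
              rw [h2, if_pos hb]
            rw [if_pos hv]
            unfold WB
            rw [if_pos hb]
          · have hv : ((pF b (k+1) : Fin (τ+1)) : ℕ) = 1 := by
              show pathFn τ s0 b (k+1) = 1
              rw [h2, if_neg hb]
            rw [if_neg (by omega), if_pos hv]
            unfold WB
            rw [if_neg hb]
        rw [hPval, mul_comm]
  -- coins read off the trajectory
  set bc : Ω → ℕ → Bool := fun ω m => decide ((s (ctime τ s0 m) ω : ℕ) = 0) with hbc
  -- pointwise dynamics on the good set
  have hptwise : ∀ ω, (∀ k, P (s k ω) (s (k+1) ω) ≠ 0) → ∀ k, s k ω = pF (bc ω) k := by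
    intro ω hg k
    induction k with
    | zero =>
      rw [hs0 ω]
      apply Fin.ext
      show s0 = pathFn τ s0 (bc ω) 0
      rw [pathFn_zero]
    | succ k ih =>
      have hg' := hg k
      rw [ih] at hg'
      rcases shape hτ hs0τ (bc ω) k with ⟨h1, h2, h3⟩ | ⟨h1, h1', h2, h3⟩ | ⟨h1, hct, h2, h3⟩
      · rw [hP, if_pos (show ((pF (bc ω) k : Fin (τ+1)) : ℕ) ≤ 1 from h1)] at hg'
        have hj : ((s (k+1) ω : Fin (τ+1)) : ℕ) = 2 := by
          by_contra hne
          rw [if_neg hne] at hg'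
          exact hg' rfl
        apply Fin.ext
        show ((s (k+1) ω : Fin (τ+1)) : ℕ) = pathFn τ s0 (bc ω) (k+1)
        rw [hj, h2]
      · rw [hP, if_neg (show ¬ ((pF (bc ω) k : Fin (τ+1)) : ℕ) ≤ 1 by
            show ¬ pathFn τ s0 (bc ω) k ≤ 1; omega),
          if_pos (show ((pF (bc ω) k : Fin (τ+1)) : ℕ) < τ from h1')] at hg'
        have hj : ((s (k+1) ω : Fin (τ+1)) : ℕ) = pathFn τ s0 (bc ω) k + 1 := by
          by_contra hne
          rw [if_neg hne] at hg'
          exact hg' rfl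
        apply Fin.ext
        show ((s (k+1) ω : Fin (τ+1)) : ℕ) = pathFn τ s0 (bc ω) (k+1)
        rw [hj, h2]
      · rw [hP, if_neg (show ¬ ((pF (bc ω) k : Fin (τ+1)) : ℕ) ≤ 1 by
            show ¬ pathFn τ s0 (bc ω) k ≤ 1; omega),
          if_neg (show ¬ ((pF (bc ω) k : Fin (τ+1)) : ℕ) < τ by
            show ¬ pathFn τ s0 (bc ω) k < τ; omega)] at hg'
        have hj : ((s (k+1) ω : Fin (τ+1)) : ℕ) ≤ 1 := by
          by_contra hgt
          rw [if_neg (by omega), if_neg (by omega)] at hg'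
          exact hg' rfl
        have hbceq : bc ω (nCoins τ s0 k) = decide (((s (k+1) ω : Fin (τ+1)) : ℕ) = 0) := by
          rw [hbc]
          show decide ((s (ctime τ s0 (nCoins τ s0 k)) ω : ℕ) = 0) = _
          rw [← hct]
        apply Fin.ext
        show ((s (k+1) ω : Fin (τ+1)) : ℕ) = pathFn τ s0 (bc ω) (k+1)
        rw [h2, hbceq]
        by_cases h0 : ((s (k+1) ω : Fin (τ+1)) : ℕ) = 0
        · rw [h0]
          simp
        · have hv1 : ((s (k+1) ω : Fin (τ+1)) : ℕ) = 1 := by omega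
          rw [hv1]
          simp
  -- bad steps are null
  have hbad : ∀ k : ℕ, μ {ω | P (s k ω) (s (k+1) ω) = 0} = 0 := by
    intro k
    have hsub : {ω | P (s k ω) (s (k+1) ω) = 0}
        ⊆ ⋃ v : Fin (k+1) → Fin (τ+1), ⋃ j : Fin (τ+1),
          (if P (v ⟨k, Nat.lt_succ_self k⟩) j = 0 then
            ({ω | ∀ i ≤ k, s i ω =
              (fun i => if h : i < k+1 then v ⟨i,h⟩ else ⟨0, by omega⟩) i}
              ∩ {ω | s (k+1) ω = j}) else ∅) := by
      intro ω hω
      refine Set.mem_iUnion.mpr ⟨fun i => s i.1 ω, Set.mem_iUnion.mpr ⟨s (k+1) ω, ?_⟩⟩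
      have hcond : P ((fun i : Fin (k+1) => s i.1 ω) ⟨k, Nat.lt_succ_self k⟩) (s (k+1) ω) = 0 := hω
      rw [if_pos hcond]
      exact ⟨fun i hi => by simp only [dif_pos (show i < k+1 by omega)], rfl⟩
    refine le_antisymm (le_trans (measure_mono hsub) ?_) (zero_le)
    refine le_trans (measure_iUnion_le _) ?_
    have hz : ∀ (v : Fin (k+1) → Fin (τ+1)) (j : Fin (τ+1)),
        μ (if P (v ⟨k, Nat.lt_succ_self k⟩) j = 0 then
          ({ω | ∀ i ≤ k, s i ω =
            (fun i => if h : i < k+1 then v ⟨i,h⟩ else ⟨0, by omega⟩) i}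
            ∩ {ω | s (k+1) ω = j}) else ∅) = 0 := by
      intro v j
      split_ifs with h
      · rw [hstep k _ j, dif_pos (Nat.lt_succ_self k), h, ENNReal.ofReal_zero, zero_mul]
      · exact measure_empty
    refine le_trans (ENNReal.tsum_le_tsum fun v => measure_iUnion_le _) ?_
    exact le_of_eq (ENNReal.tsum_eq_zero.mpr fun v =>
      ENNReal.tsum_eq_zero.mpr fun j => hz v j)
  have hGP : μ {ω | ¬ ∀ k, P (s k ω) (s (k+1) ω) ≠ 0} = 0 := by
    have hsub : {ω | ¬ ∀ k, P (s k ω) (s (k+1) ω) ≠ 0}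
        ⊆ ⋃ k : ℕ, {ω | P (s k ω) (s (k+1) ω) = 0} := by
      intro ω hω
      simp only [Set.mem_setOf_eq, not_forall, not_not] at hω
      obtain ⟨k, hk⟩ := hω
      exact Set.mem_iUnion.mpr ⟨k, hk⟩
    refine le_antisymm (le_trans (measure_mono hsub) ?_) (zero_le)
    refine le_trans (measure_iUnion_le _) ?_
    simp [hbad]
  -- law of the coins
  have hupperHT : ∀ (L : ℕ) (v : Fin L → Bool), μ (cylEv bc L v) ≤ Wt p L v := by
    intro L v
    set vb : ℕ → Bool := fun m => if h : m < L then v ⟨m, h⟩ else false with hvb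
    set K : ℕ := if L = 0 then 0 else ctime τ s0 (L-1) with hK
    have hnK : nCoins τ s0 K = L := by
      rw [hK]
      split_ifs with h
      · rw [h, nCoins, if_neg (by omega)]
      · rw [nCoins_ctime (by omega)]
        omega
    have hWt : (∏ m ∈ Finset.range (nCoins τ s0 K), WB p (vb m)) = Wt p L v := by
      rw [hnK, Wt, ← Fin.prod_univ_eq_prod_range (fun m => WB p (vb m)) L]
      apply Finset.prod_congr rfl
      intro m _
      congr 1
      rw [hvb]
      simp only [dif_pos m.2]
    have hsub : cylEv bc L v
        ⊆ {ω | ∀ i ≤ K, s i ω = pF vb i} ∪ {ω | ¬ ∀ k, P (s k ω) (s (k+1) ω) ≠ 0} := by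
      intro ω hω
      by_cases hg : ∀ k, P (s k ω) (s (k+1) ω) ≠ 0
      · left
        intro i hi
        rw [hptwise ω hg i]
        apply Fin.ext
        show pathFn τ s0 (bc ω) i = pathFn τ s0 vb i
        apply pathFn_congr (n := L)
        · intro m hm
          have := hω ⟨m, hm⟩
          rw [hvb]
          simp only [dif_pos hm]
          exact this
        · rw [← hnK]
          exact nCoins_mono hi
      · exact Or.inr hg
    calc μ (cylEv bc L v) ≤ μ {ω | ∀ i ≤ K, s i ω = pF vb i}
          + μ {ω | ¬ ∀ k, P (s k ω) (s (k+1) ω) ≠ 0} :=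
        le_trans (measure_mono hsub) (measure_union_le _ _)
      _ = Wt p L v := by rw [hGP, add_zero, hcyl vb K, hWt]
  have HT : ∀ (L : ℕ) (v : Fin L → Bool), μ (cylEv bc L v) = Wt p L v := by
    intro L v
    refine le_antisymm (hupperHT L v) ?_
    have hcover : (1:ENNReal) ≤ ∑ v' : Fin L → Bool, μ (cylEv bc L v') := by
      calc (1:ENNReal) = μ Set.univ := measure_univ.symm
        _ ≤ μ (⋃ v' ∈ (Finset.univ : Finset (Fin L → Bool)), cylEv bc L v') := by
            apply measure_mono
            intro ω _
            simp only [Set.mem_iUnion]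
            exact ⟨fun m => bc ω m.1, Finset.mem_univ _, fun m => rfl⟩
        _ ≤ _ := measure_biUnion_finset_le _ _
    have h1 : (1:ENNReal) ≤ μ (cylEv bc L v) + ∑ v' ∈ Finset.univ.erase v, Wt p L v' := by
      calc (1:ENNReal) ≤ ∑ v' : Fin L → Bool, μ (cylEv bc L v') := hcover
        _ = μ (cylEv bc L v) + ∑ v' ∈ Finset.univ.erase v, μ (cylEv bc L v') :=
            (Finset.add_sum_erase _ _ (Finset.mem_univ v)).symm
        _ ≤ _ := by
            gcongr with v' hv'
            exact hupperHT L v'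
    have h2 : Wt p L v + ∑ v' ∈ Finset.univ.erase v, Wt p L v' = 1 := by
      rw [Finset.add_sum_erase _ _ (Finset.mem_univ v), Wt_total hp]
    have hfin : (∑ v' ∈ Finset.univ.erase v, Wt p L v') ≠ ⊤ := by
      intro hc
      rw [hc] at h2
      simp at h2
    have h3 : Wt p L v + ∑ v' ∈ Finset.univ.erase v, Wt p L v'
        ≤ μ (cylEv bc L v) + ∑ v' ∈ Finset.univ.erase v, Wt p L v' := by
      rw [h2]
      exact h1
    exact (ENNReal.add_le_add_iff_right hfin).mp h3
  -- the good set
  set GI : Set Ω := {ω | (∀ k, P (s k ω) (s (k+1) ω) ≠ 0)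
      ∧ {m | bc ω m = true}.Infinite} with hGIdef
  have hGIc : μ GIᶜ = 0 := by
    have hsub : GIᶜ ⊆ {ω | ¬ ∀ k, P (s k ω) (s (k+1) ω) ≠ 0}
        ∪ {ω | ¬ ({m | bc ω m = true}.Infinite)} := by
      intro ω hω
      rw [hGIdef] at hω
      simp only [Set.mem_compl_iff, Set.mem_setOf_eq, not_and_or] at hω
      exact hω
    refine le_antisymm (le_trans (measure_mono hsub) ?_) (zero_le)
    refine le_trans (measure_union_le _ _) ?_
    rw [hGP, notInf_null μ bc hp HT, add_zero]
  -- increments in terms of gaps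
  set z : ℕ := if s0 = 0 then 0 else 1 with hz
  have hX : ∀ ω, (∀ k, P (s k ω) (s (k+1) ω) ≠ 0) → {m | bc ω m = true}.Infinite →
      ∀ i, t (i+1) ω - t i ω = (gap (bc ω) (i + z) + 1) * τ := by
    intro ω hg hinf i
    rw [ht (i+1) ω, ht i ω]
    have hpred : (fun k => ((s k ω : ℕ) = 0)) = (fun k => pathFn τ s0 (bc ω) k = 0) := by
      funext k
      have hk : ((s k ω : Fin (τ+1)) : ℕ) = pathFn τ s0 (bc ω) k := by
        rw [hptwise ω hg k]
      rw [hk]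
    rw [hpred, hz]
    exact increment_eq hτ hs0τ (bc ω) hinf i
  -- the master formula
  have master' : ∀ (n : ℕ) (B : ℕ → Set ℕ),
      μ {ω | ∀ i < n, t (i+1) ω - t i ω ∈ B i}
        = ∏ i ∈ Finset.range n, sigP p {g | (g+1) * τ ∈ B i} := by
    intro n B
    rcases Nat.eq_zero_or_pos n with rfl | hn
    · have hset : {ω | ∀ i < 0, t (i+1) ω - t i ω ∈ B i} = Set.univ := by
        ext ω
        simp
      rw [hset, measure_univ, Finset.range_zero, Finset.prod_empty]
    · set n' : ℕ := n + z with hn'def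
      have hn' : 1 ≤ n' := by omega
      set An : ℕ → Set ℕ := fun j =>
        if z ≤ j then {g | (g+1) * τ ∈ B (j - z)} else Set.univ with hAn
      set A : Fin n' → Set ℕ := fun j => An j.1 with hA
      have hEiff : ∀ ω ∈ GI, ((ω ∈ {ω | ∀ i < n, t (i+1) ω - t i ω ∈ B i}) ↔
          ∃ w, w ∈ {w : Fin n' → ℕ | ∀ j, w j ∈ A j} ∧
            ∀ m < qpos (extFn w) (n'-1) + 1, bc ω m = pv (extFn w) n' m) := by
        rintro ω ⟨hg, hinf⟩
        constructor
        · intro hω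
          refine ⟨fun j => gap (bc ω) j.1, ?_, ?_⟩
          · intro j
            show gap (bc ω) j.1 ∈ An j.1
            rw [hAn]
            by_cases hjz : z ≤ j.1
            · simp only [if_pos hjz]
              have hji : j.1 - z < n := by have := j.2; omega
              have hXi := hX ω hg hinf (j.1 - z)
              have hiz : j.1 - z + z = j.1 := by omega
              rw [hiz] at hXi
              have hBmem := hω (j.1 - z) hji
              rw [hXi] at hBmem
              exact hBmem
            · simp only [if_neg hjz]
              trivial
          · have hgm := gaps_match (bc ω) hinf n' hn'
            have hext : ∀ tt, tt < n' → extFn (fun j : Fin n' => gap (bc ω) j.1) tt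
                = gap (bc ω) tt := by
              intro tt htt
              unfold extFn
              rw [dif_pos htt]
            have hq : qpos (extFn (fun j : Fin n' => gap (bc ω) j.1)) (n'-1)
                = qpos (gap (bc ω)) (n'-1) :=
              qpos_congr _ _ _ (fun tt htt => hext tt (by omega))
            intro m hm
            rw [hq] at hm
            rw [pv_congr (extFn (fun j : Fin n' => gap (bc ω) j.1)) (gap (bc ω)) n'
              (fun tt htt => hext tt htt) m]
            exact hgm m hm
        · rintro ⟨w, hwS, hmatch⟩ i hi
          have hHq : ∀ j, j < n' → Hh (bc ω) j = qpos (extFn w) j := by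
            intro j hj
            exact nth_qpos (bc ω) (extFn w) n' hmatch hj
          have hgapw : ∀ j, j < n' → gap (bc ω) j = extFn w j := by
            intro j hj
            cases j with
            | zero =>
              have h0 : gap (bc ω) 0 = Hh (bc ω) 0 := by unfold gap; rw [if_pos rfl]
              rw [h0, hHq 0 hj]
              rfl
            | succ j =>
              have h0 : gap (bc ω) (j+1) = Hh (bc ω) (j+1) - Hh (bc ω) j - 1 := by
                unfold gap
                rw [if_neg (by omega : ¬ (j+1 = 0)), Nat.add_sub_cancel]
              rw [h0, hHq (j+1) hj, hHq j (by omega)]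
              have hqs : qpos (extFn w) (j+1)
                  = qpos (extFn w) j + extFn w (j+1) + 1 := rfl
              omega
          have hXi := hX ω hg hinf i
          have hin' : i + z < n' := by omega
          rw [hgapw (i+z) hin'] at hXi
          have hw := hwS ⟨i+z, hin'⟩
          have hw' : (w ⟨i+z, hin'⟩ + 1) * τ ∈ B i := by
            have hAeq : An (i+z) = {g | (g+1) * τ ∈ B i} := by
              rw [hAn]
              simp only [if_pos (show z ≤ i + z by omega)]
              rw [show i + z - z = i by omega]
            have hwAn : w ⟨i+z, hin'⟩ ∈ An (i+z) := hw
            rw [hAeq] at hwAn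
            exact hwAn
          have hext2 : extFn w (i+z) = w ⟨i+z, hin'⟩ := by
            unfold extFn
            rw [dif_pos hin']
          rw [hext2] at hXi
          rw [hXi]
          exact hw'
      have hmain := master μ bc hp HT hn' {w : Fin n' → ℕ | ∀ j, w j ∈ A j}
        {ω | ∀ i < n, t (i+1) ω - t i ω ∈ B i} GI hGIc hEiff
      rw [hmain, tsum_indicator_pi A]
      have hAfin : ∀ j : Fin n', A j = An j.1 := fun j => rfl
      rw [Finset.prod_congr rfl (fun j _ => by rw [hAfin j]),
        Fin.prod_univ_eq_prod_range (fun i => sigP p (An i)) n']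
      by_cases hs00 : s0 = 0
      · have hz0 : z = 0 := by rw [hz, if_pos hs00]
        have hnn : n' = n := by omega
        rw [hnn]
        apply Finset.prod_congr rfl
        intro i _
        rw [hAn]
        simp only [if_pos (show z ≤ i by omega)]
        rw [hz0, Nat.sub_zero]
      · have hz1 : z = 1 := by rw [hz, if_neg hs00]
        have hnn : n' = n + 1 := by omega
        rw [hnn, Finset.prod_range_succ']
        have h0 : An 0 = Set.univ := by
          rw [hAn]
          simp only [if_neg (show ¬ z ≤ 0 by omega)]
        have hs' : ∀ i, An (i + 1) = (if z ≤ i + 1 then {g | (g+1) * τ ∈ B (i + 1 - z)}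
            else Set.univ) := fun i => rfl
        rw [h0, sigP_univ hp, mul_one]
        apply Finset.prod_congr rfl
        intro i _
        rw [hs' i]
        simp only [if_pos (show z ≤ i + 1 by omega)]
        rw [show i + 1 - z = i by omega]
  -- Target 1
  have target1 : μ {ω | {k : ℕ | (s k ω : ℕ) = 0}.Infinite} = 1 := by
    have hsub : GI ⊆ {ω | {k : ℕ | (s k ω : ℕ) = 0}.Infinite} := by
      rintro ω ⟨hg, hinf⟩
      show Set.Infinite _
      have himg : (fun m => ctime τ s0 m) '' {m | bc ω m = true}
          ⊆ {k | ((s k ω : Fin (τ+1)) : ℕ) = 0} := by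
        rintro k ⟨m, hm, rfl⟩
        show ((s (ctime τ s0 m) ω : Fin (τ+1)) : ℕ) = 0
        exact of_decide_eq_true hm
      exact Set.Infinite.mono himg
        (Set.Infinite.image ((ctime_strictMono hτ).injective.injOn) hinf)
    refine le_antisymm (le_trans (measure_mono (Set.subset_univ _)) (le_of_eq measure_univ)) ?_
    calc (1:ENNReal) = μ Set.univ := measure_univ.symm
      _ ≤ μ ({ω | {k : ℕ | (s k ω : ℕ) = 0}.Infinite} ∪ GIᶜ) := by
          apply measure_mono
          intro ω _
          by_cases h : ω ∈ GI
          · exact Or.inl (hsub h)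
          · exact Or.inr h
      _ ≤ μ {ω | {k : ℕ | (s k ω : ℕ) = 0}.Infinite} + μ GIᶜ := measure_union_le _ _
      _ = μ {ω | {k : ℕ | (s k ω : ℕ) = 0}.Infinite} := by rw [hGIc, add_zero]
  -- single-coordinate law
  have hsingleB : ∀ (i : ℕ) (Bs : Set ℕ),
      μ {ω | t (i+1) ω - t i ω ∈ Bs} = sigP p {g | (g+1) * τ ∈ Bs} := by
    intro i Bs
    have hset : {ω | t (i+1) ω - t i ω ∈ Bs}
        = {ω | ∀ j < i+1, t (j+1) ω - t j ω ∈ (fun j => if j = i then Bs else Set.univ) j} := by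
      ext ω
      simp only [Set.mem_setOf_eq]
      constructor
      · intro h j hj
        by_cases hji : j = i
        · subst hji
          simp only [if_pos rfl]
          exact h
        · simp only [if_neg hji]
          trivial
      · intro h
        have h2 := h i (Nat.lt_succ_self i)
        simpa using h2
    rw [hset, master', Finset.prod_range_succ]
    have h1 : ∀ j ∈ Finset.range i,
        sigP p {g | (g+1) * τ ∈ (if j = i then Bs else Set.univ)} = 1 := by
      intro j hj
      rw [Finset.mem_range] at hj
      rw [if_neg (by omega)]
      have huniv : {g : ℕ | (g+1) * τ ∈ (Set.univ : Set ℕ)} = Set.univ := by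
        ext g
        simp
      rw [huniv, sigP_univ hp]
    rw [Finset.prod_congr rfl h1, Finset.prod_const_one, one_mul, if_pos rfl]
  -- Target 2 : independence
  have target2 : iIndepFun (m := fun _ : ℕ => (inferInstance : MeasurableSpace ℕ))
      (fun i ω => t (i+1) ω - t i ω) μ := by
    rw [ProbabilityTheory.iIndepFun_iff_measure_inter_preimage_eq_mul]
    intro S sets _
    set n := S.sup id + 1 with hnS
    have hSn : ∀ i ∈ S, i < n := by
      intro i hi
      have := Finset.le_sup (f := id) hi
      simp only [id] at this
      omega
    have hset : (⋂ i ∈ S, (fun ω => t (i+1) ω - t i ω) ⁻¹' sets i)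
        = {ω | ∀ j < n, t (j+1) ω - t j ω ∈ (fun j => if j ∈ S then sets j else Set.univ) j} := by
      ext ω
      simp only [Set.mem_iInter, Set.mem_preimage, Set.mem_setOf_eq]
      constructor
      · intro h j hj
        by_cases hjS : j ∈ S
        · simp only [if_pos hjS]
          exact h j hjS
        · simp only [if_neg hjS]
          trivial
      · intro h j hjS
        have h2 := h j (hSn j hjS)
        simpa [if_pos hjS] using h2
    rw [hset, master']
    have hprod : (∏ j ∈ Finset.range n,
        sigP p {g | (g+1)*τ ∈ (if j ∈ S then sets j else Set.univ)})
        = ∏ j ∈ S, sigP p {g | (g+1)*τ ∈ sets j} := by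
      rw [← Finset.prod_subset (fun i hi => Finset.mem_range.mpr (hSn i hi)) ?van]
      case van =>
        intro x _ hxS
        rw [if_neg hxS]
        have huniv : {g : ℕ | (g+1) * τ ∈ (Set.univ : Set ℕ)} = Set.univ := by
          ext g
          simp
        rw [huniv, sigP_univ hp]
      apply Finset.prod_congr rfl
      intro j hj
      rw [if_pos hj]
    rw [hprod]
    apply Finset.prod_congr rfl
    intro j _
    exact (hsingleB j (sets j)).symm
  -- Target 3
  have target3 : ∀ i k : ℕ, 1 ≤ k →
      μ {ω | t (i+1) ω - t i ω = k * τ} = ENNReal.ofReal ((1 - p)^(k-1) * p) := by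
    intro i k hk
    have hset : {ω | t (i+1) ω - t i ω = k * τ}
        = {ω | t (i+1) ω - t i ω ∈ ({k * τ} : Set ℕ)} := rfl
    rw [hset, hsingleB]
    have hgset : {g : ℕ | (g+1) * τ ∈ ({k * τ} : Set ℕ)} = {k - 1} := by
      ext g
      simp only [Set.mem_setOf_eq, Set.mem_singleton_iff]
      constructor
      · intro h
        have hgk : g + 1 = k := Nat.eq_of_mul_eq_mul_right (by omega) h
        omega
      · intro h
        subst h
        rw [show k - 1 + 1 = k by omega]
    rw [hgset, sigP_singleton, ENNReal.ofReal_mul (pow_nonneg (by linarith) _),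
      ENNReal.ofReal_pow (by linarith), mul_comm]
  -- Target 4
  have target4 : ∀ i : ℕ, μ {ω | ∃ k : ℕ, 1 ≤ k ∧ t (i+1) ω - t i ω = k * τ} = 1 := by
    intro i
    have hset : {ω | ∃ k : ℕ, 1 ≤ k ∧ t (i+1) ω - t i ω = k * τ}
        = {ω | t (i+1) ω - t i ω ∈ {x : ℕ | ∃ k, 1 ≤ k ∧ x = k * τ}} := rfl
    rw [hset, hsingleB]
    have huniv : {g : ℕ | (g+1) * τ ∈ {x : ℕ | ∃ k, 1 ≤ k ∧ x = k * τ}} = Set.univ := by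
      ext g
      simp only [Set.mem_setOf_eq, Set.mem_univ, iff_true]
      exact ⟨g+1, by omega, rfl⟩
    rw [huniv, sigP_univ hp]
  exact ⟨target1, target2, target3, target4⟩
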